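/- arXiv:1106.4654 — 5 statements merged into one kernel-verified Lean document; each statement's English description precedes it below -/
import Mathlib

section
/- Let A be a self-adjoint operator on a Hilbert space H and let B(A)* be the dual Besov space with norm ‖u‖_{B*} = sup_{j≥1} R_j^{-1/2} ‖F(R_{j-1} ≤ |A| < R_j) u‖, where R_0 = 0 and R_j = 2^{j-1} for j ≥ 1. Then for every u ∈ B(A)*, one has ‖u‖_{B*} ≤ sup_{R>1} R^{-1/2} ‖F(|A| < R) u‖ ≤ 2 ‖u‖_{B*}. -/
open scoped InnerProductSpace ENNReal

noncomputable section

/-- The dyadic radii: `R_0 = 0`, `R_j = 2^(j-1)` for `j ≥ 1`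
(here indexed so that `dyadicR (k+1) = 2^k`). -/
def dyadicR : ℕ → ℝ
  | 0 => 0
  | k + 1 => 2 ^ k

/-- An abstract projection-valued (spectral) measure on `ℝ`, modelling the spectral
resolution of a self-adjoint operator `A` on a complex Hilbert space `H`:
`P S` is the spectral projection of `A` onto the Borel set `S`. -/
structure SpectralMeasure (H : Type*) [NormedAddCommGroup H] [InnerProductSpace ℂ H]
    [CompleteSpace H] where
  P : Set ℝ → H →L[ℂ] H
  inter : ∀ S T : Set ℝ, (P S).comp (P T) = P (S ∩ T)
  symm : ∀ (S : Set ℝ) (u v : H), ⟪P S u, v⟫_ℂ = ⟪u, P S v⟫_ℂ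
  empty : P ∅ = 0
  univ : P Set.univ = ContinuousLinearMap.id ℂ H
  hasSum_iUnion : ∀ S : ℕ → Set ℝ, Pairwise (Function.onFun Disjoint S) →
    ∀ u : H, HasSum (fun n => P (S n) u) (P (⋃ n, S n) u)

variable {H : Type*} [NormedAddCommGroup H] [InnerProductSpace ℂ H] [CompleteSpace H]

/-- The spectral projection `F_j(A)` onto `{R_{j-1} ≤ |A| < R_j}` (0-indexed: `band k`
corresponds to `F_{k+1}`). -/
def SpectralMeasure.band (A : SpectralMeasure H) (k : ℕ) : H →L[ℂ] H :=
  A.P {t : ℝ | dyadicR k ≤ |t| ∧ |t| < dyadicR (k + 1)}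

def bandSet (k : ℕ) : Set ℝ := {t : ℝ | dyadicR k ≤ |t| ∧ |t| < dyadicR (k + 1)}

lemma band_eq (A : SpectralMeasure H) (k : ℕ) : A.band k = A.P (bandSet k) := rfl

lemma P_comp_apply (A : SpectralMeasure H) (S T : Set ℝ) (u : H) :
    A.P S (A.P T u) = A.P (S ∩ T) u := by
  have := A.inter S T
  calc A.P S (A.P T u) = ((A.P S).comp (A.P T)) u := rfl
    _ = A.P (S ∩ T) u := by rw [this]

lemma norm_P_le (A : SpectralMeasure H) (S : Set ℝ) (v : H) : ‖A.P S v‖ ≤ ‖v‖ := by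
  have hidem : A.P S (A.P S v) = A.P S v := by
    rw [P_comp_apply, Set.inter_self]
  have h1 : ⟪A.P S v, A.P S v⟫_ℂ = ⟪v, A.P S v⟫_ℂ := by
    rw [A.symm, hidem]
  have h2 : ‖A.P S v‖ ^ 2 = RCLike.re ⟪v, A.P S v⟫_ℂ := by
    rw [← h1, inner_self_eq_norm_sq]
  have h3 : RCLike.re ⟪v, A.P S v⟫_ℂ ≤ ‖v‖ * ‖A.P S v‖ := by
    calc RCLike.re ⟪v, A.P S v⟫_ℂ ≤ ‖⟪v, A.P S v⟫_ℂ‖ := RCLike.re_le_norm _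
      _ ≤ ‖v‖ * ‖A.P S v‖ := norm_inner_le_norm _ _
  rcases eq_or_lt_of_le (norm_nonneg (A.P S v)) with h | h
  · rw [← h]; exact norm_nonneg v
  · nlinarith [h2, h3]

lemma norm_P_mono (A : SpectralMeasure H) {S T : Set ℝ} (h : S ⊆ T) (u : H) :
    ‖A.P S u‖ ≤ ‖A.P T u‖ := by
  have : A.P S u = A.P S (A.P T u) := by
    rw [P_comp_apply, Set.inter_eq_left.mpr h]
  rw [this]; exact norm_P_le A S _

lemma dyadicR_mono {j k : ℕ} (h : j + 1 ≤ k) : dyadicR (j + 1) ≤ dyadicR k := by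
  obtain ⟨m, rfl⟩ := Nat.exists_eq_add_of_le h
  show (2:ℝ)^j ≤ dyadicR (j + 1 + m)
  obtain ⟨m', hm⟩ : ∃ m', j + 1 + m = m' + 1 := ⟨j + m, by omega⟩
  rw [hm]
  show (2:ℝ)^j ≤ 2 ^ m'
  exact pow_le_pow_right₀ one_le_two (by omega)

lemma bandSet_disjoint {j k : ℕ} (h : j ≠ k) : bandSet j ∩ bandSet k = ∅ := by
  wlog hlt : j < k generalizing j k
  · rw [Set.inter_comm]; exact this h.symm (by omega)
  ext t
  simp only [bandSet, Set.mem_inter_iff, Set.mem_setOf_eq, Set.mem_empty_iff_false, iff_false]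
  rintro ⟨⟨_, h2⟩, ⟨h3, _⟩⟩
  have := dyadicR_mono (j := j) (k := k) (by omega)
  linarith

lemma union_bandSet (n : ℕ) : (⋃ k ∈ Finset.range (n + 1), bandSet k) = {t : ℝ | |t| < 2 ^ n} := by
  induction n with
  | zero =>
    ext t
    simp [bandSet, dyadicR, abs_nonneg]
  | succ n ih =>
    have : Finset.range (n + 2) = insert (n + 1) (Finset.range (n + 1)) := by
      rw [Finset.range_add_one]
    rw [this]
    simp only [Finset.set_biUnion_insert, ih]
    ext t
    simp only [Set.mem_union, Set.mem_setOf_eq, bandSet]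
    constructor
    · rintro (⟨h1, h2⟩ | h)
      · show |t| < (2:ℝ)^(n+1)
        have : dyadicR (n + 1 + 1) = (2:ℝ)^(n+1) := rfl
        rw [← this]; exact h2
      · calc |t| < (2:ℝ)^n := h
          _ ≤ 2^(n+1) := pow_le_pow_right₀ one_le_two (by omega)
    · intro ht
      rcases le_or_gt ((2:ℝ)^n) |t| with h | h
      · left; exact ⟨h, ht⟩
      · right; exact h

lemma P_ball_eq_sum (A : SpectralMeasure H) (n : ℕ) (u : H) :
    A.P {t : ℝ | |t| < 2 ^ n} u = ∑ k ∈ Finset.range (n + 1), A.band k u := by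
  set S : ℕ → Set ℝ := fun k => if k < n + 1 then bandSet k else ∅ with hS
  have hdisj : Pairwise (Function.onFun Disjoint S) := by
    intro j k hjk
    simp only [Function.onFun, hS]
    split_ifs with h1 h2 h2 <;>
      simp [Set.disjoint_iff_inter_eq_empty, bandSet_disjoint hjk]
  have hU : (⋃ k, S k) = {t : ℝ | |t| < 2 ^ n} := by
    rw [← union_bandSet n]
    ext t
    simp only [Set.mem_iUnion, hS]
    constructor
    · rintro ⟨k, hk⟩
      by_cases h : k < n + 1
      · rw [if_pos h] at hk
        exact ⟨k, Finset.mem_range.mpr h, hk⟩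
      · rw [if_neg h] at hk; exact absurd hk (Set.notMem_empty t)
    · intro ht
      simp only [Set.mem_iUnion, exists_prop, Finset.mem_range] at ht
      obtain ⟨k, hk1, hk2⟩ := ht
      exact ⟨k, by rw [if_pos hk1]; exact hk2⟩
  have h1 : HasSum (fun k => A.P (S k) u) (A.P {t : ℝ | |t| < 2 ^ n} u) := by
    rw [← hU]; exact A.hasSum_iUnion S hdisj u
  have h2 : HasSum (fun k => A.P (S k) u) (∑ k ∈ Finset.range (n + 1), A.P (S k) u) := by
    apply hasSum_sum_of_ne_finset_zero
    intro k hk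
    simp only [Finset.mem_range, not_lt] at hk
    simp [hS, Nat.not_lt.mpr hk, show ¬ k ≤ n by omega, A.empty]
  have := h1.unique h2
  rw [this]
  apply Finset.sum_congr rfl
  intro k hk
  simp only [Finset.mem_range] at hk
  simp [hS, if_pos hk, show k ≤ n by omega, band_eq]

lemma band_orthogonal (A : SpectralMeasure H) {j k : ℕ} (h : j ≠ k) (u : H) :
    ⟪A.band j u, A.band k u⟫_ℂ = 0 := by
  rw [band_eq, band_eq, A.symm, P_comp_apply, bandSet_disjoint h, A.empty]
  simp

lemma norm_sum_sq_of_orthogonal {ι : Type*} (s : Finset ι) (f : ι → H)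
    (h : ∀ i ∈ s, ∀ j ∈ s, i ≠ j → ⟪f i, f j⟫_ℂ = 0) :
    ‖∑ i ∈ s, f i‖ ^ 2 = ∑ i ∈ s, ‖f i‖ ^ 2 := by
  classical
  have key : ⟪∑ i ∈ s, f i, ∑ j ∈ s, f j⟫_ℂ = ∑ i ∈ s, ⟪f i, f i⟫_ℂ := by
    rw [sum_inner]
    apply Finset.sum_congr rfl
    intro i hi
    rw [inner_sum]
    rw [Finset.sum_eq_single i]
    · intro j hj hji
      exact h i hi j hj (Ne.symm hji)
    · intro hi'; exact absurd hi hi'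
  have := congrArg RCLike.re key
  rw [inner_self_eq_norm_sq, map_sum] at this
  rw [this]
  apply Finset.sum_congr rfl
  intro i _
  rw [inner_self_eq_norm_sq]

/-- The Besov norm `‖u‖_B = Σ_j R_j^{1/2} ‖F_j(A) u‖`, valued in `ℝ≥0∞`;
`u ∈ B(A)` precisely when this is finite. -/
def SpectralMeasure.besov (A : SpectralMeasure H) (u : H) : ℝ≥0∞ :=
  ∑' k : ℕ, ENNReal.ofReal (Real.sqrt (dyadicR (k + 1)) * ‖A.band k u‖)

/-- The dual Besov norm `‖u‖_{B*} = sup_{j≥1} R_j^{-1/2} ‖F_j(A) u‖`, valued in `ℝ≥0∞`. -/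
def SpectralMeasure.dualNorm (A : SpectralMeasure H) (u : H) : ℝ≥0∞ :=
  ⨆ k : ℕ, ENNReal.ofReal ((Real.sqrt (dyadicR (k + 1)))⁻¹ * ‖A.band k u‖)

/-- `‖u‖_{B*} ≤ sup_{R>1} R^{-1/2} ‖F(|A| < R) u‖ ≤ 2 ‖u‖_{B*}`. -/
theorem stmt0 (A : SpectralMeasure H) (u : H) :
    A.dualNorm u ≤
      (⨆ (R : ℝ) (_ : 1 < R),
        ENNReal.ofReal ((Real.sqrt R)⁻¹ * ‖A.P {t : ℝ | |t| < R} u‖)) ∧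
    (⨆ (R : ℝ) (_ : 1 < R),
        ENNReal.ofReal ((Real.sqrt R)⁻¹ * ‖A.P {t : ℝ | |t| < R} u‖)) ≤
      2 * A.dualNorm u := by
  constructor
  · -- first inequality
    rw [SpectralMeasure.dualNorm]
    apply iSup_le
    intro k
    apply ENNReal.le_of_forall_lt_one_mul_le
    intro a ha
    have hatop : a ≠ ⊤ := ha.ne_top
    set r : ℝ := max a.toReal (1/2) with hrdef
    have hr0 : 0 < r := lt_of_lt_of_le (by norm_num) (le_max_right _ _)
    have hr1 : r < 1 := by
      apply max_lt _ (by norm_num)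
      have := (ENNReal.toReal_lt_toReal hatop (by simp)).mpr ha
      simpa using this
    have har : a ≤ ENNReal.ofReal r := by
      rw [← ENNReal.ofReal_toReal hatop]
      exact ENNReal.ofReal_le_ofReal (le_max_left _ _)
    set R : ℝ := r⁻¹ ^ 2 * 2 ^ k with hRdef
    have hrinv : 1 < r⁻¹ := (one_lt_inv₀ hr0).mpr hr1
    have h2k1 : (1:ℝ) ≤ 2 ^ k := one_le_pow₀ one_le_two
    have hR1 : 1 < R := by
      have : (1:ℝ) < r⁻¹ ^ 2 := by nlinarith
      nlinarith
    have hsqrtR : Real.sqrt R = r⁻¹ * Real.sqrt (2 ^ k) := by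
      rw [hRdef, Real.sqrt_mul (sq_nonneg _), Real.sqrt_sq (by positivity)]
    have hd1 : dyadicR (k + 1) = (2:ℝ) ^ k := rfl
    have hsub : {t : ℝ | dyadicR k ≤ |t| ∧ |t| < dyadicR (k + 1)} ⊆ {t : ℝ | |t| < R} := by
      intro t ht
      simp only [Set.mem_setOf_eq] at ht ⊢
      have h1 : (2:ℝ)^k ≤ R := by
        have h12 : (1:ℝ) ≤ r⁻¹ ^ 2 := by nlinarith
        rw [hRdef]
        nlinarith [mul_le_mul_of_nonneg_right h12 (by positivity : (0:ℝ) ≤ 2 ^ k)]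
      calc |t| < dyadicR (k + 1) := ht.2
        _ = (2:ℝ)^k := hd1
        _ ≤ R := h1
    have hmono := norm_P_mono A hsub u
    have hsk : 0 < Real.sqrt (2 ^ k) := Real.sqrt_pos.mpr (by positivity)
    calc a * ENNReal.ofReal ((Real.sqrt (dyadicR (k + 1)))⁻¹ * ‖A.band k u‖)
        ≤ ENNReal.ofReal r * ENNReal.ofReal ((Real.sqrt (dyadicR (k + 1)))⁻¹ * ‖A.band k u‖) :=
          mul_le_mul_left har _
      _ = ENNReal.ofReal (r * ((Real.sqrt (dyadicR (k + 1)))⁻¹ * ‖A.band k u‖)) :=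
          (ENNReal.ofReal_mul hr0.le).symm
      _ = ENNReal.ofReal ((Real.sqrt R)⁻¹ * ‖A.band k u‖) := by
          rw [hsqrtR, hd1, mul_inv, inv_inv]
          ring_nf
      _ ≤ ENNReal.ofReal ((Real.sqrt R)⁻¹ * ‖A.P {t : ℝ | |t| < R} u‖) := by
          apply ENNReal.ofReal_le_ofReal
          apply mul_le_mul_of_nonneg_left _ (by positivity)
          exact hmono
      _ ≤ ⨆ (R : ℝ) (_ : 1 < R),
            ENNReal.ofReal ((Real.sqrt R)⁻¹ * ‖A.P {t : ℝ | |t| < R} u‖) :=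
          le_iSup₂ (f := fun (R : ℝ) (_ : 1 < R) =>
            ENNReal.ofReal ((Real.sqrt R)⁻¹ * ‖A.P {t : ℝ | |t| < R} u‖)) R hR1
  · -- second inequality
    by_cases hd : A.dualNorm u = ⊤
    · rw [hd]
      simp [ENNReal.mul_top]
    set m : ℝ := (A.dualNorm u).toReal with hmdef
    have hm0 : 0 ≤ m := ENNReal.toReal_nonneg
    have hband : ∀ k : ℕ, ‖A.band k u‖ ≤ Real.sqrt (2 ^ k) * m := by
      intro k
      have h1 : ENNReal.ofReal ((Real.sqrt (dyadicR (k + 1)))⁻¹ * ‖A.band k u‖) ≤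
          A.dualNorm u := le_iSup (fun k => ENNReal.ofReal
            ((Real.sqrt (dyadicR (k + 1)))⁻¹ * ‖A.band k u‖)) k
      rw [ENNReal.ofReal_le_iff_le_toReal hd] at h1
      have hd1 : dyadicR (k + 1) = (2:ℝ) ^ k := rfl
      rw [hd1] at h1
      have hsk : 0 < Real.sqrt (2 ^ k) := Real.sqrt_pos.mpr (by positivity)
      have := mul_le_mul_of_nonneg_left h1 hsk.le
      rw [← mul_assoc, mul_inv_cancel₀ hsk.ne', one_mul] at this
      exact this
    apply iSup₂_le
    intro R hR
    have hex : ∃ n : ℕ, R ≤ 2 ^ n := by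
      obtain ⟨n, hn⟩ := pow_unbounded_of_one_lt R (one_lt_two (α := ℝ))
      exact ⟨n, hn.le⟩
    set n := Nat.find hex with hndef
    have hn : R ≤ 2 ^ n := Nat.find_spec hex
    have hn0 : n ≠ 0 := by
      intro h0
      rw [h0] at hn
      simp at hn
      linarith
    obtain ⟨p, hp⟩ := Nat.exists_eq_succ_of_ne_zero hn0
    have hpmin : (2:ℝ) ^ p < R := by
      have := Nat.find_min hex (m := p) (by omega)
      push_neg at this
      exact this
    -- norm bound
    have hsub : {t : ℝ | |t| < R} ⊆ {t : ℝ | |t| < 2 ^ (p + 1)} := by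
      intro t ht
      simp only [Set.mem_setOf_eq] at ht ⊢
      calc |t| < R := ht
        _ ≤ 2 ^ n := hn
        _ = 2 ^ (p + 1) := by rw [hp]
    have hmono := norm_P_mono A hsub u
    have hsum := P_ball_eq_sum A (p + 1) u
    have hpyth : ‖A.P {t : ℝ | |t| < 2 ^ (p + 1)} u‖ ^ 2 =
        ∑ k ∈ Finset.range (p + 2), ‖A.band k u‖ ^ 2 := by
      rw [hsum]
      exact norm_sum_sq_of_orthogonal _ _ (fun i _ j _ hij => band_orthogonal A hij u)
    have hsum_le : ∑ k ∈ Finset.range (p + 2), ‖A.band k u‖ ^ 2 ≤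
        2 ^ (p + 2) * m ^ 2 := by
      have h1 : ∀ k ∈ Finset.range (p + 2), ‖A.band k u‖ ^ 2 ≤ 2 ^ k * m ^ 2 := by
        intro k _
        have := hband k
        have hsq : (Real.sqrt (2 ^ k) * m) ^ 2 = 2 ^ k * m ^ 2 := by
          rw [mul_pow, Real.sq_sqrt (by positivity)]
        nlinarith [norm_nonneg (A.band k u), Real.sqrt_nonneg ((2:ℝ) ^ k), hm0]
      calc ∑ k ∈ Finset.range (p + 2), ‖A.band k u‖ ^ 2
          ≤ ∑ k ∈ Finset.range (p + 2), (2:ℝ) ^ k * m ^ 2 := Finset.sum_le_sum h1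
        _ = (∑ k ∈ Finset.range (p + 2), (2:ℝ) ^ k) * m ^ 2 := by
            rw [Finset.sum_mul]
        _ = (2 ^ (p + 2) - 1) * m ^ 2 := by
            rw [geom_sum_eq (by norm_num : (2:ℝ) ≠ 1)]
            ring_nf
        _ ≤ 2 ^ (p + 2) * m ^ 2 := by nlinarith
    have hnorm_le : ‖A.P {t : ℝ | |t| < 2 ^ (p + 1)} u‖ ≤ Real.sqrt (2 ^ (p + 2)) * m := by
      have h2 : ‖A.P {t : ℝ | |t| < 2 ^ (p + 1)} u‖ ^ 2 ≤ (Real.sqrt (2 ^ (p + 2)) * m) ^ 2 := by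
        rw [hpyth, mul_pow, Real.sq_sqrt (by positivity)]
        exact hsum_le
      have h3 : 0 ≤ Real.sqrt (2 ^ (p + 2)) * m := by positivity
      nlinarith [norm_nonneg (A.P {t : ℝ | |t| < 2 ^ (p + 1)} u)]
    have hsqrt4 : Real.sqrt ((2:ℝ) ^ (p + 2)) = 2 * Real.sqrt (2 ^ p) := by
      have : (2:ℝ) ^ (p + 2) = 2 ^ 2 * 2 ^ p := by ring
      rw [this, Real.sqrt_mul (by positivity), Real.sqrt_sq (by norm_num)]
    have hsp : 0 < Real.sqrt ((2:ℝ) ^ p) := Real.sqrt_pos.mpr (by positivity)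
    have hsR : Real.sqrt (2 ^ p) ≤ Real.sqrt R := Real.sqrt_le_sqrt hpmin.le
    have hsRpos : 0 < Real.sqrt R := Real.sqrt_pos.mpr (by linarith)
    have hinv : (Real.sqrt R)⁻¹ ≤ (Real.sqrt ((2:ℝ) ^ p))⁻¹ :=
      inv_anti₀ hsp hsR
    have key : (Real.sqrt R)⁻¹ * ‖A.P {t : ℝ | |t| < R} u‖ ≤ 2 * m := by
      calc (Real.sqrt R)⁻¹ * ‖A.P {t : ℝ | |t| < R} u‖
          ≤ (Real.sqrt ((2:ℝ) ^ p))⁻¹ * (Real.sqrt (2 ^ (p + 2)) * m) := by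
            apply mul_le_mul hinv (hmono.trans hnorm_le) (norm_nonneg _) (by positivity)
        _ = 2 * m := by
            rw [hsqrt4]
            field_simp
    calc ENNReal.ofReal ((Real.sqrt R)⁻¹ * ‖A.P {t : ℝ | |t| < R} u‖)
        ≤ ENNReal.ofReal (2 * m) := ENNReal.ofReal_le_ofReal key
      _ = ENNReal.ofReal 2 * ENNReal.ofReal m := ENNReal.ofReal_mul (by norm_num)
      _ = 2 * A.dualNorm u := by
          rw [hmdef, ENNReal.ofReal_toReal hd]
          norm_num

end
end

section
/- Let A be a self-adjoint operator on a Hilbert space H with A ≥ I, and let s > -1. Then A^{-s/2} maps B(A) homeomorphically onto B(A^{1+s}), and there is a constant C = C(s) > 0, independent of A, such that ‖A^{-s/2} u‖_{B(A^{1+s})} ≤ C ‖u‖_{B(A)} for all u ∈ B(A) and ‖A^{s/2} v‖_{B(A)} ≤ C ‖v‖_{B(A^{1+s})} for all v ∈ B(A^{1+s}). -/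
open MeasureTheory Filter Topology
open scoped ENNReal

noncomputable section

/-- For the self-adjoint multiplication operator by the real function `a` on `L²(μ)`,
the norm of the spectral block `F(R_k ≤ |A| < R_{k+1}) u`, i.e. of the restriction of
`u` to `{R_k ≤ |a| < R_{k+1}}`, valued in `ℝ≥0∞`. -/
def blockE {α : Type*} [MeasurableSpace α] (μ : Measure α) (a : α → ℝ) (u : α → ℂ)
    (k : ℕ) : ℝ≥0∞ :=
  eLpNorm (Set.indicator {x | dyadicR k ≤ |a x| ∧ |a x| < dyadicR (k + 1)} u) 2 μ

/-- The Besov norm `‖u‖_{B(a)} = Σ_j R_j^{1/2} ‖F_j u‖` of the multiplication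
operator by `a` on `L²(μ)`, valued in `ℝ≥0∞`; `u ∈ B(a)` iff this is finite. -/
def besovE {α : Type*} [MeasurableSpace α] (μ : Measure α) (a : α → ℝ) (u : α → ℂ) :
    ℝ≥0∞ :=
  ∑' k : ℕ, ENNReal.ofReal (Real.sqrt (dyadicR (k + 1))) * blockE μ a u k

/-- The dual Besov norm `‖u‖_{B(a)*} = sup_j R_j^{-1/2} ‖F_j u‖`, valued in `ℝ≥0∞`. -/
def dualE {α : Type*} [MeasurableSpace α] (μ : Measure α) (a : α → ℝ) (u : α → ℂ) :
    ℝ≥0∞ :=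
  ⨆ k : ℕ, (ENNReal.ofReal (Real.sqrt (dyadicR (k + 1))))⁻¹ * blockE μ a u k


namespace Stmt4Aux

def Db {α : Type*} (d : α → ℝ) (k : ℕ) : Set α :=
  {x | dyadicR k ≤ |d x| ∧ |d x| < dyadicR (k + 1)}

lemma dyadicR_nonneg (k : ℕ) : 0 ≤ dyadicR k := by
  cases k with
  | zero => simp [dyadicR]
  | succ n => simp only [dyadicR]; positivity

lemma dyadicR_mono : Monotone dyadicR := by
  apply monotone_nat_of_le_succ
  intro k
  cases k with
  | zero => simp only [dyadicR]; positivity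
  | succ n =>
    simp only [dyadicR]
    exact pow_le_pow_right₀ one_le_two (Nat.le_succ n)

lemma measurableSet_Db {α : Type*} [MeasurableSpace α] {d : α → ℝ} (hd : Measurable d)
    (k : ℕ) : MeasurableSet (Db d k) :=
  (hd.abs) measurableSet_Ico

lemma disjoint_Db {α : Type*} (d : α → ℝ) : Pairwise (Function.onFun Disjoint (Db d)) := by
  intro k l hkl
  wlog h : k < l generalizing k l
  · exact (this hkl.symm (by omega)).symm
  simp only [Function.onFun]
  rw [Set.disjoint_left]
  rintro x ⟨_, h2⟩ ⟨h3, _⟩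
  exact absurd (h2.trans_le ((dyadicR_mono (by omega : k + 1 ≤ l)).trans h3)) (lt_irrefl _)

lemma iUnion_Db {α : Type*} (d : α → ℝ) : (⋃ k, Db d k) = Set.univ := by
  ext x
  simp only [Set.mem_iUnion, Set.mem_univ, iff_true]
  obtain ⟨n, hn⟩ := pow_unbounded_of_one_lt (|d x|) (one_lt_two (α := ℝ))
  have hex : ∃ n : ℕ, |d x| < 2 ^ n := ⟨n, hn⟩
  classical
  set m := Nat.find hex with hm
  have hspec : |d x| < 2 ^ m := Nat.find_spec hex
  cases hm' : m with
  | zero =>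
    refine ⟨0, ?_, ?_⟩
    · simp [Db, dyadicR, abs_nonneg]
    · rw [hm'] at hspec; simpa [Db, dyadicR] using hspec
  | succ m' =>
    refine ⟨m' + 1, ?_, ?_⟩
    · have := Nat.find_min hex (m := m') (by omega)
      simpa [Db, dyadicR] using not_lt.mp this
    · rw [hm'] at hspec; simpa [Db, dyadicR] using hspec

end Stmt4Aux

namespace Stmt4Aux

lemma rpow_half_tsum_le (y : ℕ → ℝ≥0∞) :
    (∑' k, y k) ^ (1/2 : ℝ) ≤ ∑' k, (y k) ^ (1/2 : ℝ) := by
  set S := ∑' k, (y k) ^ (1/2 : ℝ) with hS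
  have hy : ∀ k, y k = (y k) ^ (1/2 : ℝ) * (y k) ^ (1/2 : ℝ) := by
    intro k
    rw [← ENNReal.rpow_add_of_nonneg (1/2 : ℝ) (1/2 : ℝ) (by norm_num) (by norm_num)]
    norm_num
  have h1 : (∑' k, y k) ≤ S * S := by
    calc ∑' k, y k = ∑' k, (y k) ^ (1/2 : ℝ) * (y k) ^ (1/2 : ℝ) := by
          exact tsum_congr hy
      _ ≤ ∑' k, (y k) ^ (1/2 : ℝ) * S :=
          ENNReal.tsum_le_tsum fun k => mul_le_mul_right (ENNReal.le_tsum k) _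
      _ = S * S := by rw [ENNReal.tsum_mul_right]
  calc (∑' k, y k) ^ (1/2 : ℝ) ≤ (S * S) ^ (1/2 : ℝ) :=
        ENNReal.rpow_le_rpow h1 (by norm_num)
    _ = S := by
        rw [← pow_two S, ← ENNReal.rpow_natCast S 2, ← ENNReal.rpow_mul]
        norm_num

lemma split_eLpNorm {α : Type*} [MeasurableSpace α] (μ : Measure α) {d : α → ℝ}
    (hd : Measurable d) (S : Set α) (w : α → ℂ) :
    eLpNorm (S.indicator w) 2 μ ≤ ∑' k, eLpNorm ((S ∩ Db d k).indicator w) 2 μ := by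
  have h2 : (2 : ℝ≥0∞) ≠ 0 := by norm_num
  have h2' : (2 : ℝ≥0∞) ≠ ∞ := by norm_num
  rw [eLpNorm_eq_lintegral_rpow_enorm_toReal h2 h2']
  simp only [enorm_eq_nnnorm]
  have hkey : (∫⁻ x, (‖S.indicator w x‖₊ : ℝ≥0∞) ^ (2:ℝ≥0∞).toReal ∂μ) =
      ∑' k, ∫⁻ x, (‖(S ∩ Db d k).indicator w x‖₊ : ℝ≥0∞) ^ (2:ℝ≥0∞).toReal ∂μ := by
    set f : α → ℝ≥0∞ := fun x => (‖S.indicator w x‖₊ : ℝ≥0∞) ^ (2:ℝ≥0∞).toReal with hf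
    have hres : μ = Measure.sum (fun k => μ.restrict (Db d k)) := by
      conv_lhs => rw [← Measure.restrict_univ (μ := μ), ← iUnion_Db d]
      exact Measure.restrict_iUnion (disjoint_Db d) (measurableSet_Db hd)
    calc ∫⁻ x, f x ∂μ = ∑' k, ∫⁻ x, f x ∂(μ.restrict (Db d k)) := by
          conv_lhs => rw [hres]
          exact lintegral_sum_measure f _
      _ = ∑' k, ∫⁻ x, (‖(S ∩ Db d k).indicator w x‖₊ : ℝ≥0∞) ^ (2:ℝ≥0∞).toReal ∂μ := by
          refine tsum_congr fun k => ?_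
          rw [← lintegral_indicator (measurableSet_Db hd k) f]
          refine lintegral_congr fun x => ?_
          by_cases hx : x ∈ Db d k
          · by_cases hxS : x ∈ S <;>
              simp [hf, Set.indicator_of_mem, Set.indicator_of_notMem, hx, hxS,
                Set.mem_inter_iff]
          · simp [hf, Set.indicator_of_notMem, hx, Set.mem_inter_iff,
              ENNReal.zero_rpow_of_pos (by norm_num : (0:ℝ) < (2:ℝ≥0∞).toReal)]
  rw [hkey]
  calc (∑' k, ∫⁻ x, (‖(S ∩ Db d k).indicator w x‖₊ : ℝ≥0∞) ^ (2:ℝ≥0∞).toReal ∂μ) ^ (1/(2:ℝ≥0∞).toReal)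
      ≤ ∑' k, (∫⁻ x, (‖(S ∩ Db d k).indicator w x‖₊ : ℝ≥0∞) ^ (2:ℝ≥0∞).toReal ∂μ) ^ (1/2 : ℝ) := by
        have := rpow_half_tsum_le
          (fun k => ∫⁻ x, (‖(S ∩ Db d k).indicator w x‖₊ : ℝ≥0∞) ^ (2:ℝ≥0∞).toReal ∂μ)
        simpa using this
    _ = ∑' k, eLpNorm ((S ∩ Db d k).indicator w) 2 μ := by
        refine tsum_congr fun k => ?_
        rw [eLpNorm_eq_lintegral_rpow_enorm_toReal h2 h2']
        simp only [enorm_eq_nnnorm]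
        norm_num

end Stmt4Aux


namespace Stmt4Aux

lemma sqrt_two_pow (n : ℕ) : Real.sqrt (2 ^ n) = Real.sqrt 2 ^ n := by
  rw [Real.sqrt_eq_rpow, Real.sqrt_eq_rpow, ← Real.rpow_natCast (2:ℝ) n,
    ← Real.rpow_natCast ((2:ℝ) ^ (1/2:ℝ)) n, ← Real.rpow_mul (by norm_num : (0:ℝ) ≤ 2),
    ← Real.rpow_mul (by norm_num : (0:ℝ) ≤ 2)]
  ring_nf

lemma blockE_eq {α : Type*} [MeasurableSpace α] (μ : Measure α) (a : α → ℝ) (u : α → ℂ)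
    (k : ℕ) : blockE μ a u k = eLpNorm ((Db a k).indicator u) 2 μ := rfl

lemma key {α : Type} [MeasurableSpace α] (μ : Measure α) (c d g : α → ℝ) (u : α → ℂ)
    (hd : Measurable d) (T G : ℝ) (hT : 0 < T) (hG : 1 ≤ G)
    (H1 : ∀ k x, x ∈ Db d k → |c x| < 2 ^ ((k:ℝ) * T))
    (H2 : ∀ k x, x ∈ Db d k → |g x| ≤ G * 2 ^ ((k:ℝ) * (1 - T) / 2)) :
    besovE μ c (fun x => g x • u x) ≤
      ENNReal.ofReal (2 * G / (Real.sqrt 2 - 1)) * besovE μ d u := by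
  have hs2 : (1:ℝ) < Real.sqrt 2 := by
    rw [show (1:ℝ) = Real.sqrt 1 by simp]
    exact Real.sqrt_lt_sqrt (by norm_num) (by norm_num)
  have hCpos : (0:ℝ) ≤ 2 * G / (Real.sqrt 2 - 1) := by
    apply div_nonneg (by linarith) (by linarith)
  set w : α → ℂ := fun x => g x • u x with hw
  -- per-k estimate
  have hk : ∀ k : ℕ,
      (∑' j : ℕ, ENNReal.ofReal (Real.sqrt (dyadicR (j + 1))) *
        eLpNorm ((Db c j ∩ Db d k).indicator w) 2 μ) ≤
      ENNReal.ofReal (2 * G / (Real.sqrt 2 - 1)) *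
        (ENNReal.ofReal (Real.sqrt (dyadicR (k + 1))) * blockE μ d u k) := by
    intro k
    set J : ℕ := Nat.floor ((k:ℝ) * T) + 1 with hJ
    have hkT0 : (0:ℝ) ≤ (k:ℝ) * T := by positivity
    have hzero : ∀ j ∉ Finset.range (J + 1),
        ENNReal.ofReal (Real.sqrt (dyadicR (j + 1))) *
          eLpNorm ((Db c j ∩ Db d k).indicator w) 2 μ = 0 := by
      intro j hj
      rw [Finset.mem_range, not_lt] at hj
      have hempty : Db c j ∩ Db d k = ∅ := by
        rw [Set.eq_empty_iff_forall_notMem]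
        rintro x ⟨hx1, hx2⟩
        obtain ⟨j', rfl⟩ : ∃ j', j = j' + 1 := ⟨j - 1, by omega⟩
        have h2 : (2:ℝ) ^ (j' : ℝ) ≤ |c x| := by
          rw [Real.rpow_natCast]; exact hx1.1
        have h4 : (2:ℝ) ^ (j' : ℝ) < 2 ^ ((k:ℝ) * T) := lt_of_le_of_lt h2 (H1 k x hx2)
        have h5 : (j' : ℝ) < (k:ℝ) * T := (Real.rpow_lt_rpow_left_iff one_lt_two).mp h4
        have h6 : (k:ℝ) * T < (J : ℝ) := by
          have := Nat.lt_floor_add_one ((k:ℝ) * T)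
          rw [hJ]; push_cast; linarith
        have h7 : (J : ℝ) ≤ (j' : ℝ) := by exact_mod_cast (by omega : J ≤ j')
        linarith
      rw [hempty]
      simp
    rw [tsum_eq_sum hzero]
    set Gk : ℝ := G * 2 ^ ((k:ℝ) * (1 - T) / 2) with hGk
    have hGk0 : 0 ≤ Gk := by positivity
    have hterm : ∀ j ∈ Finset.range (J + 1),
        ENNReal.ofReal (Real.sqrt (dyadicR (j + 1))) *
          eLpNorm ((Db c j ∩ Db d k).indicator w) 2 μ ≤
        ENNReal.ofReal (Real.sqrt 2 ^ j) * (ENNReal.ofReal Gk * blockE μ d u k) := by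
      intro j _
      have h1 : Real.sqrt (dyadicR (j + 1)) = Real.sqrt 2 ^ j := by
        show Real.sqrt (2 ^ j) = _
        exact sqrt_two_pow j
      rw [h1]
      refine mul_le_mul_right ?_ _
      have hmono : ∀ x, ‖(Db c j ∩ Db d k).indicator w x‖ ≤
          ‖(Gk • (Db d k).indicator u) x‖ := by
        intro x
        by_cases hx : x ∈ Db c j ∩ Db d k
        · rw [Set.indicator_of_mem hx, Pi.smul_apply, Set.indicator_of_mem hx.2, hw]
          simp only [norm_smul, Real.norm_eq_abs]
          have := H2 k x hx.2
          have h8 : |Gk| = Gk := abs_of_nonneg hGk0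
          rw [h8]
          exact mul_le_mul_of_nonneg_right (by rw [← hGk] at this; exact this) (norm_nonneg _)
        · rw [Set.indicator_of_notMem hx]
          simp only [norm_zero]
          positivity
      calc eLpNorm ((Db c j ∩ Db d k).indicator w) 2 μ ≤
            eLpNorm (Gk • (Db d k).indicator u) 2 μ := eLpNorm_mono hmono
        _ = (‖Gk‖₊ : ℝ≥0∞) * eLpNorm ((Db d k).indicator u) 2 μ :=
            eLpNorm_const_smul Gk _ 2 μ
        _ = ENNReal.ofReal Gk * blockE μ d u k := by
            rw [← enorm_eq_nnnorm, Real.enorm_eq_ofReal hGk0, blockE_eq]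
    calc (∑ j ∈ Finset.range (J + 1), ENNReal.ofReal (Real.sqrt (dyadicR (j + 1))) *
          eLpNorm ((Db c j ∩ Db d k).indicator w) 2 μ)
        ≤ ∑ j ∈ Finset.range (J + 1),
            ENNReal.ofReal (Real.sqrt 2 ^ j) * (ENNReal.ofReal Gk * blockE μ d u k) :=
          Finset.sum_le_sum hterm
      _ = (∑ j ∈ Finset.range (J + 1), ENNReal.ofReal (Real.sqrt 2 ^ j)) *
            (ENNReal.ofReal Gk * blockE μ d u k) := by rw [← Finset.sum_mul]
      _ ≤ ENNReal.ofReal (2 * 2 ^ ((k:ℝ) * T / 2) / (Real.sqrt 2 - 1)) *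
            (ENNReal.ofReal Gk * blockE μ d u k) := by
          refine mul_le_mul_left ?_ _
          rw [← ENNReal.ofReal_sum_of_nonneg (fun i _ => pow_nonneg (Real.sqrt_nonneg 2) i)]
          refine ENNReal.ofReal_le_ofReal ?_
          rw [geom_sum_eq (by linarith : Real.sqrt 2 ≠ 1)]
          rw [div_le_div_iff_of_pos_right (by linarith : (0:ℝ) < Real.sqrt 2 - 1)]
          have hpow : Real.sqrt 2 ^ (J + 1) ≤ 2 * 2 ^ ((k:ℝ) * T / 2) := by
            have h9 : Real.sqrt 2 ^ (J + 1) = (2:ℝ) ^ (((J:ℝ) + 1) / 2) := by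
              rw [Real.sqrt_eq_rpow, ← Real.rpow_natCast ((2:ℝ) ^ (1/2:ℝ)) (J+1),
                ← Real.rpow_mul (by norm_num : (0:ℝ) ≤ 2)]
              push_cast
              ring_nf
            rw [h9]
            have h10 : ((J:ℝ) + 1) / 2 ≤ ((k:ℝ) * T + 2) / 2 := by
              have := Nat.floor_le hkT0
              rw [hJ]; push_cast; linarith
            calc (2:ℝ) ^ (((J:ℝ) + 1) / 2) ≤ 2 ^ (((k:ℝ) * T + 2) / 2) :=
                  Real.rpow_le_rpow_of_exponent_le one_le_two h10
              _ = 2 * 2 ^ ((k:ℝ) * T / 2) := by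
                  rw [show ((k:ℝ) * T + 2) / 2 = (k:ℝ) * T / 2 + 1 by ring,
                    Real.rpow_add (by norm_num : (0:ℝ) < 2), Real.rpow_one]
                  ring
          linarith
      _ ≤ ENNReal.ofReal (2 * G / (Real.sqrt 2 - 1)) *
            (ENNReal.ofReal (Real.sqrt (dyadicR (k + 1))) * blockE μ d u k) := by
          rw [← mul_assoc, ← mul_assoc]
          refine mul_le_mul_left ?_ _
          rw [← ENNReal.ofReal_mul (div_nonneg (by positivity) (by linarith)), ← ENNReal.ofReal_mul hCpos]
          refine ENNReal.ofReal_le_ofReal ?_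
          have h11 : Real.sqrt (dyadicR (k + 1)) = (2:ℝ) ^ ((k:ℝ) / 2) := by
            show Real.sqrt (2 ^ k) = _
            rw [Real.sqrt_eq_rpow, ← Real.rpow_natCast (2:ℝ) k,
              ← Real.rpow_mul (by norm_num : (0:ℝ) ≤ 2)]
            ring_nf
          rw [h11, hGk]
          rw [show (2:ℝ) * 2 ^ ((k:ℝ) * T / 2) / (Real.sqrt 2 - 1) *
              (G * 2 ^ ((k:ℝ) * (1 - T) / 2)) =
              2 * G / (Real.sqrt 2 - 1) * (2 ^ ((k:ℝ) * T / 2) * 2 ^ ((k:ℝ) * (1 - T) / 2))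
              by ring]
          rw [← Real.rpow_add (by norm_num : (0:ℝ) < 2),
            show (k:ℝ) * T / 2 + (k:ℝ) * (1 - T) / 2 = (k:ℝ) / 2 by ring]
  -- main chain
  calc besovE μ c w
      = ∑' j : ℕ, ENNReal.ofReal (Real.sqrt (dyadicR (j + 1))) *
          eLpNorm ((Db c j).indicator w) 2 μ := rfl
    _ ≤ ∑' j : ℕ, ENNReal.ofReal (Real.sqrt (dyadicR (j + 1))) *
          ∑' k : ℕ, eLpNorm ((Db c j ∩ Db d k).indicator w) 2 μ :=
        ENNReal.tsum_le_tsum fun j =>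
          mul_le_mul_right (split_eLpNorm μ hd (Db c j) w) _
    _ = ∑' j : ℕ, ∑' k : ℕ, ENNReal.ofReal (Real.sqrt (dyadicR (j + 1))) *
          eLpNorm ((Db c j ∩ Db d k).indicator w) 2 μ := by
        exact tsum_congr fun j => (ENNReal.tsum_mul_left).symm
    _ = ∑' k : ℕ, ∑' j : ℕ, ENNReal.ofReal (Real.sqrt (dyadicR (j + 1))) *
          eLpNorm ((Db c j ∩ Db d k).indicator w) 2 μ := ENNReal.tsum_comm
    _ ≤ ∑' k : ℕ, ENNReal.ofReal (2 * G / (Real.sqrt 2 - 1)) *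
          (ENNReal.ofReal (Real.sqrt (dyadicR (k + 1))) * blockE μ d u k) :=
        ENNReal.tsum_le_tsum hk
    _ = ENNReal.ofReal (2 * G / (Real.sqrt 2 - 1)) * besovE μ d u := by
        rw [ENNReal.tsum_mul_left]; rfl

end Stmt4Aux

open Stmt4Aux in
/-- for a self-adjoint operator `A ≥ I` (modelled, up to unitary
equivalence, as multiplication by a measurable function `a ≥ 1` on `L²(μ)`) and
`s > -1`, the operator `A^{-s/2}` maps `B(A)` homeomorphically onto `B(A^{1+s})`:
there is `C = C(s) > 0`, independent of `A`, with
`‖A^{-s/2} u‖_{B(A^{1+s})} ≤ C ‖u‖_{B(A)}` and `‖A^{s/2} v‖_{B(A)} ≤ C ‖v‖_{B(A^{1+s})}`. -/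
theorem stmt4 (s : ℝ) (hs : -1 < s) :
    ∃ C > (0 : ℝ), ∀ (α : Type) (_ : MeasurableSpace α) (μ : Measure α) (a : α → ℝ),
      Measurable a → (∀ x, 1 ≤ a x) →
      (∀ u : α → ℂ,
        besovE μ (fun x => a x ^ (1 + s)) (fun x => (a x ^ (-(s / 2)) : ℝ) • u x) ≤
          ENNReal.ofReal C * besovE μ a u) ∧
      (∀ v : α → ℂ,
        besovE μ a (fun x => (a x ^ (s / 2) : ℝ) • v x) ≤
          ENNReal.ofReal C * besovE μ (fun x => a x ^ (1 + s)) v) := by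
  have ht : 0 < 1 + s := by linarith
  have ht' : (1 + s) ≠ 0 := ne_of_gt ht
  set g0 : ℝ := |s| / 2 + |s| / (2 * (1 + s)) with hg0def
  have hg00 : 0 ≤ g0 := by positivity
  set G : ℝ := 2 ^ g0 with hGdef
  have hG1 : (1:ℝ) ≤ G := Real.one_le_rpow one_le_two hg00
  have hs2 : (1:ℝ) < Real.sqrt 2 := by
    rw [show (1:ℝ) = Real.sqrt 1 by simp]
    exact Real.sqrt_lt_sqrt (by norm_num) (by norm_num)
  have h2rp : ∀ A B : ℝ, A ≤ B → (2:ℝ) ^ A ≤ 2 ^ B := fun A B h =>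
    Real.rpow_le_rpow_of_exponent_le one_le_two h
  have hpow_eq : ∀ (n : ℕ) (e : ℝ), ((2:ℝ) ^ n) ^ e = 2 ^ ((n:ℝ) * e) := by
    intro n e
    rw [← Real.rpow_natCast (2:ℝ) n, ← Real.rpow_mul (by norm_num : (0:ℝ) ≤ 2)]
  have hGmul : ∀ B : ℝ, G * 2 ^ B = 2 ^ (g0 + B) := by
    intro B
    rw [Real.rpow_add (by norm_num : (0:ℝ) < 2)]
  refine ⟨2 * G / (Real.sqrt 2 - 1), div_pos (by linarith) (by linarith), ?_⟩
  intro α mα μ a ha ha1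
  have hapos : ∀ x, 0 < a x := fun x => lt_of_lt_of_le one_pos (ha1 x)
  constructor
  · -- direction 1 : A^{-s/2} : B(A) → B(A^{1+s})
    intro u
    refine key μ (fun x => a x ^ (1 + s)) a (fun x => a x ^ (-(s / 2))) u ha (1 + s) G ht hG1
      ?_ ?_
    · -- H1
      rintro k x ⟨hx1, hx2⟩
      cases k with
      | zero =>
        exfalso
        simp only [dyadicR, pow_zero] at hx2
        rw [abs_of_pos (hapos x)] at hx2
        linarith [ha1 x]
      | succ n =>
        simp only [dyadicR] at hx2
        rw [abs_of_pos (hapos x)] at hx2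
        rw [abs_of_nonneg (Real.rpow_nonneg (hapos x).le _)]
        calc a x ^ (1 + s) < ((2:ℝ) ^ (n + 1 : ℕ)) ^ (1 + s) :=
              Real.rpow_lt_rpow (hapos x).le hx2 ht
          _ = 2 ^ (((n+1:ℕ):ℝ) * (1 + s)) := hpow_eq (n+1) (1+s)
    · -- H2
      rintro k x ⟨hx1, hx2⟩
      cases k with
      | zero =>
        exfalso
        simp only [dyadicR, pow_zero] at hx2
        rw [abs_of_pos (hapos x)] at hx2
        linarith [ha1 x]
      | succ n =>
        simp only [dyadicR] at hx1 hx2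
        rw [abs_of_pos (hapos x)] at hx1 hx2
        rw [abs_of_pos (Real.rpow_pos_of_pos (hapos x) _)]
        rw [hGmul]
        rcases le_or_gt 0 s with hs0 | hs0
        · calc a x ^ (-(s/2)) ≤ ((2:ℝ) ^ n) ^ (-(s/2)) :=
              Real.rpow_le_rpow_of_nonpos (by positivity) hx1 (by linarith)
            _ = 2 ^ ((n:ℝ) * (-(s/2))) := hpow_eq n _
            _ ≤ 2 ^ (g0 + ((n+1:ℕ):ℝ) * (1 - (1+s)) / 2) := by
              apply h2rp
              have habs : |s| = s := abs_of_nonneg hs0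
              have h2 : 0 ≤ s / (2 * (1 + s)) := by positivity
              have e : ((n+1:ℕ):ℝ) * (1 - (1+s)) / 2 = (n:ℝ) * (-(s/2)) - s/2 := by
                push_cast; ring
              rw [e, hg0def, habs]
              linarith
        · calc a x ^ (-(s/2)) ≤ ((2:ℝ) ^ (n+1 : ℕ)) ^ (-(s/2)) :=
              Real.rpow_le_rpow (hapos x).le hx2.le (by linarith)
            _ = 2 ^ (((n+1:ℕ):ℝ) * (-(s/2))) := hpow_eq (n+1) _
            _ ≤ 2 ^ (g0 + ((n+1:ℕ):ℝ) * (1 - (1+s)) / 2) := by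
              apply h2rp
              have e : ((n+1:ℕ):ℝ) * (1 - (1+s)) / 2 = ((n+1:ℕ):ℝ) * (-(s/2)) := by
                push_cast; ring
              rw [e, hg0def]
              have h2 : 0 ≤ |s| / (2 * (1 + s)) := by positivity
              have h3 := abs_nonneg s
              linarith
  · -- direction 2 : A^{s/2} : B(A^{1+s}) → B(A)
    intro v
    have hbpos : ∀ x, 0 < a x ^ (1 + s) := fun x => Real.rpow_pos_of_pos (hapos x) _
    have hb1 : ∀ x, 1 ≤ a x ^ (1 + s) := fun x => Real.one_le_rpow (ha1 x) ht.le
    refine key μ a (fun x => a x ^ (1 + s)) (fun x => a x ^ (s / 2)) v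
      (ha.pow_const (1 + s)) (1 / (1 + s)) G (by positivity) hG1 ?_ ?_
    · -- H1
      rintro k x ⟨hx1, hx2⟩
      cases k with
      | zero =>
        exfalso
        simp only [dyadicR, pow_zero] at hx2
        rw [abs_of_pos (hbpos x)] at hx2
        linarith [hb1 x]
      | succ n =>
        simp only [dyadicR] at hx2
        rw [abs_of_pos (hbpos x)] at hx2
        rw [abs_of_pos (hapos x)]
        have step : (a x ^ (1+s)) ^ (1/(1+s)) < ((2:ℝ) ^ (n+1:ℕ)) ^ (1/(1+s)) :=
          Real.rpow_lt_rpow (Real.rpow_nonneg (hapos x).le _) hx2 (by positivity)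
        rw [← Real.rpow_mul (hapos x).le, mul_one_div, div_self ht', Real.rpow_one,
          hpow_eq] at step
        exact step
    · -- H2
      rintro k x ⟨hx1, hx2⟩
      cases k with
      | zero =>
        exfalso
        simp only [dyadicR, pow_zero] at hx2
        rw [abs_of_pos (hbpos x)] at hx2
        linarith [hb1 x]
      | succ n =>
        simp only [dyadicR] at hx1 hx2
        rw [abs_of_pos (hbpos x)] at hx1 hx2
        rw [abs_of_pos (Real.rpow_pos_of_pos (hapos x) _)]
        rw [hGmul]
        have hhi : a x < 2 ^ (((n+1:ℕ):ℝ) * (1/(1+s))) := by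
          have step : (a x ^ (1+s)) ^ (1/(1+s)) < ((2:ℝ) ^ (n+1:ℕ)) ^ (1/(1+s)) :=
            Real.rpow_lt_rpow (Real.rpow_nonneg (hapos x).le _) hx2 (by positivity)
          rw [← Real.rpow_mul (hapos x).le, mul_one_div, div_self ht', Real.rpow_one,
            hpow_eq] at step
          exact step
        have hlo : (2:ℝ) ^ ((n:ℝ) * (1/(1+s))) ≤ a x := by
          have step : ((2:ℝ) ^ (n:ℕ)) ^ (1/(1+s)) ≤ (a x ^ (1+s)) ^ (1/(1+s)) :=
            Real.rpow_le_rpow (by positivity) hx1 (by positivity)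
          rw [← Real.rpow_mul (hapos x).le, mul_one_div, div_self ht', Real.rpow_one,
            hpow_eq] at step
          exact step
        rcases le_or_gt 0 s with hs0 | hs0
        · calc a x ^ (s/2) ≤ ((2:ℝ) ^ (((n+1:ℕ):ℝ) * (1/(1+s)))) ^ (s/2) :=
              Real.rpow_le_rpow (hapos x).le hhi.le (by linarith)
            _ = 2 ^ ((((n+1:ℕ):ℝ) * (1/(1+s))) * (s/2)) := by
              rw [← Real.rpow_mul (by norm_num : (0:ℝ) ≤ 2)]
            _ ≤ 2 ^ (g0 + ((n+1:ℕ):ℝ) * (1 - 1/(1+s)) / 2) := by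
              apply h2rp
              have h1t : 1 - 1/(1+s) = s/(1+s) := by field_simp; ring
              have habs : |s| = s := abs_of_nonneg hs0
              have hkey : ((n+1:ℕ):ℝ) * (s/(1+s)) / 2 = (((n+1:ℕ):ℝ) * (1/(1+s))) * (s/2) := by
                ring
              have h2 : 0 ≤ s / (2 * (1 + s)) := by positivity
              rw [h1t, hg0def, habs, hkey]
              linarith
        · calc a x ^ (s/2) ≤ ((2:ℝ) ^ ((n:ℝ) * (1/(1+s)))) ^ (s/2) :=
              Real.rpow_le_rpow_of_nonpos (by positivity) hlo (by linarith)
            _ = 2 ^ (((n:ℝ) * (1/(1+s))) * (s/2)) := by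
              rw [← Real.rpow_mul (by norm_num : (0:ℝ) ≤ 2)]
            _ ≤ 2 ^ (g0 + ((n+1:ℕ):ℝ) * (1 - 1/(1+s)) / 2) := by
              apply h2rp
              have h1t : 1 - 1/(1+s) = s/(1+s) := by field_simp; ring
              have habs : |s| = -s := abs_of_neg hs0
              have e : ((n+1:ℕ):ℝ) * (s/(1+s)) / 2 =
                  ((n:ℝ) * (1/(1+s))) * (s/2) + s/(2*(1+s)) := by
                push_cast; field_simp
              have hcancel : (-s)/(2*(1+s)) + s/(2*(1+s)) = 0 := by ring
              have h2 : 0 ≤ -s/2 := by linarith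
              rw [h1t, hg0def, habs, e]
              linarith
end
end

section
/- Let A be a self-adjoint operator on a Hilbert space H, c ∈ ℝ, and u ∈ B(A). Suppose either |c| > 1, or else u = F(|cA| ≥ 1) u. Then u ∈ B(cA) and ‖u‖_{B(cA)} ≤ 8 |c|^{1/2} ‖u‖_{B(A)}. Moreover, in the case |c| ≤ 1 with u = F(|cA| ≥ 1)u, the sharper bound ‖u‖_{B(cA)} ≤ 3 |c|^{1/2} ‖u‖_{B(A)} holds. -/
open scoped InnerProductSpace ENNReal

noncomputable section

variable {H : Type*} [NormedAddCommGroup H] [InnerProductSpace ℂ H] [CompleteSpace H]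

/-- The Besov norm of `u` with respect to the scaled operator `cA`, whose spectral
projection onto `S` is `P {t | c·t ∈ S}`. -/
def SpectralMeasure.besovScaled (A : SpectralMeasure H) (c : ℝ) (u : H) : ℝ≥0∞ :=
  ∑' k : ℕ, ENNReal.ofReal (Real.sqrt (dyadicR (k + 1)) *
    ‖A.P {t : ℝ | dyadicR k ≤ |c * t| ∧ |c * t| < dyadicR (k + 1)} u‖)


namespace SpectralMeasure

lemma proj_inter_apply (A : SpectralMeasure H) (S T : Set ℝ) (u : H) :
    A.P (S ∩ T) u = A.P S (A.P T u) := by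
  conv_lhs => rw [← A.inter]
  rfl

lemma norm_proj_le (A : SpectralMeasure H) (S : Set ℝ) (u : H) : ‖A.P S u‖ ≤ ‖u‖ := by
  rcases eq_or_ne (A.P S u) 0 with h0 | h0
  · simp [h0]
  · have hidem : A.P S (A.P S u) = A.P S u := by
      rw [← A.proj_inter_apply, Set.inter_self]
    have hkey : ‖A.P S u‖ ^ 2 ≤ ‖u‖ * ‖A.P S u‖ := by
      calc ‖A.P S u‖ ^ 2 = RCLike.re ⟪A.P S u, A.P S u⟫_ℂ := (inner_self_eq_norm_sq _).symm
        _ = RCLike.re ⟪u, A.P S (A.P S u)⟫_ℂ := by rw [A.symm]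
        _ = RCLike.re ⟪u, A.P S u⟫_ℂ := by rw [hidem]
        _ ≤ ‖⟪u, A.P S u⟫_ℂ‖ := RCLike.re_le_norm _
        _ ≤ ‖u‖ * ‖A.P S u‖ := norm_inner_le_norm _ _
    have hpos : 0 < ‖A.P S u‖ := norm_pos_iff.mpr h0
    nlinarith

lemma norm_proj_inter_le (A : SpectralMeasure H) (S T : Set ℝ) (u : H) :
    ‖A.P (S ∩ T) u‖ ≤ ‖A.P T u‖ := by
  rw [A.proj_inter_apply]; exact A.norm_proj_le _ _

end SpectralMeasure

def Sband (c : ℝ) (k : ℕ) : Set ℝ := {t : ℝ | dyadicR k ≤ |c * t| ∧ |c * t| < dyadicR (k + 1)}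

def Bband (j : ℕ) : Set ℝ := {t : ℝ | dyadicR j ≤ |t| ∧ |t| < dyadicR (j + 1)}

lemma dyadicR_succ (k : ℕ) : dyadicR (k + 1) = 2 ^ k := rfl

lemma dyadicR_mono_s5 : Monotone dyadicR := by
  apply monotone_nat_of_le_succ
  intro n
  cases n with
  | zero => norm_num [dyadicR]
  | succ m =>
    rw [dyadicR_succ, dyadicR_succ]
    exact pow_le_pow_right₀ one_le_two (by omega)

lemma pairwise_disjoint_Bband : Pairwise (Function.onFun Disjoint Bband) := by
  have key : ∀ i j : ℕ, i < j → Disjoint (Bband i) (Bband j) := by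
    intro i j hij
    rw [Set.disjoint_left]
    rintro t ⟨_, h2⟩ ⟨h3, _⟩
    have : dyadicR (i + 1) ≤ dyadicR j := dyadicR_mono_s5 hij
    linarith
  intro i j hij
  rcases hij.lt_or_gt with hlt | hlt
  · exact key _ _ hlt
  · exact (key _ _ hlt).symm

lemma iUnion_Bband : (⋃ j, Bband j) = Set.univ := by
  ext t
  simp only [Set.mem_iUnion, Set.mem_univ, iff_true]
  rcases lt_or_ge |t| 1 with hlt | hle
  · exact ⟨0, show dyadicR 0 ≤ |t| ∧ |t| < dyadicR 1 from
      ⟨by simp [dyadicR], by simpa [dyadicR] using hlt⟩⟩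
  · have hex : ∃ n : ℕ, |t| < 2 ^ n := pow_unbounded_of_one_lt |t| one_lt_two
    have hn : |t| < 2 ^ Nat.find hex := Nat.find_spec hex
    have hn0 : Nat.find hex ≠ 0 := by
      intro h0
      rw [h0] at hn
      norm_num at hn
      linarith
    obtain ⟨m, hm⟩ := Nat.exists_eq_succ_of_ne_zero hn0
    refine ⟨Nat.find hex, ?_, ?_⟩
    · rw [hm, dyadicR_succ]
      by_contra hcon
      push_neg at hcon
      exact Nat.find_min hex (by omega) hcon
    · rw [dyadicR_succ]
      exact hn

lemma SpectralMeasure.hasSum_band_decomp (A : SpectralMeasure H) (S : Set ℝ) (u : H) :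
    HasSum (fun j => A.P (S ∩ Bband j) u) (A.P S u) := by
  have hd : Pairwise (Function.onFun Disjoint fun j => S ∩ Bband j) := by
    intro i j hij
    exact (pairwise_disjoint_Bband hij).mono Set.inter_subset_right Set.inter_subset_right
  have := A.hasSum_iUnion (fun j => S ∩ Bband j) hd u
  rwa [← Set.inter_iUnion, iUnion_Bband, Set.inter_univ] at this

lemma sqrt_two_pow (k : ℕ) : Real.sqrt (2 ^ k) = Real.sqrt 2 ^ k := by
  induction k with
  | zero => simp
  | succ n ih => rw [pow_succ, pow_succ, Real.sqrt_mul (by positivity), ih]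

lemma SpectralMeasure.scaled_term_le (A : SpectralMeasure H) {c : ℝ} (hc : c ≠ 0) (u : H)
    (k : ℕ) :
    ENNReal.ofReal (Real.sqrt (dyadicR (k + 1)) * ‖A.P (Sband c k) u‖)
      ≤ ∑' j, ENNReal.ofReal (Real.sqrt (dyadicR (k + 1)) * ‖A.P (Sband c k ∩ Bband j) u‖) := by
  have hca : 0 < |c| := abs_pos.mpr hc
  obtain ⟨N, hN⟩ : ∃ N : ℕ, (2 : ℝ) ^ k < |c| * 2 ^ N := by
    obtain ⟨N, hN⟩ := pow_unbounded_of_one_lt ((2 : ℝ) ^ k / |c|) one_lt_two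
    exact ⟨N, by rwa [div_lt_iff₀ hca, mul_comm] at hN⟩
  have hempty : ∀ j, N + 1 ≤ j → Sband c k ∩ Bband j = ∅ := by
    intro j hj
    ext t
    simp only [Set.mem_inter_iff, Set.mem_empty_iff_false, iff_false, not_and]
    rintro ⟨_, h2⟩ ⟨h3, _⟩
    have hd : (2 : ℝ) ^ N ≤ dyadicR j := by
      calc (2 : ℝ) ^ N = dyadicR (N + 1) := (dyadicR_succ N).symm
        _ ≤ dyadicR j := dyadicR_mono_s5 hj
    rw [dyadicR_succ] at h2
    rw [abs_mul] at h2
    nlinarith [abs_nonneg t, abs_nonneg c]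
  have hzero : ∀ j ∉ Finset.range (N + 1), A.P (Sband c k ∩ Bband j) u = 0 := by
    intro j hj
    rw [hempty j (by simpa using hj), A.empty]
    rfl
  have hsum : A.P (Sband c k) u = ∑ j ∈ Finset.range (N + 1), A.P (Sband c k ∩ Bband j) u :=
    (A.hasSum_band_decomp _ u).unique (hasSum_sum_of_ne_finset_zero hzero)
  calc ENNReal.ofReal (Real.sqrt (dyadicR (k + 1)) * ‖A.P (Sband c k) u‖)
      ≤ ENNReal.ofReal (Real.sqrt (dyadicR (k + 1)) *
          ∑ j ∈ Finset.range (N + 1), ‖A.P (Sband c k ∩ Bband j) u‖) := by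
        apply ENNReal.ofReal_le_ofReal
        apply mul_le_mul_of_nonneg_left _ (Real.sqrt_nonneg _)
        rw [hsum]
        exact norm_sum_le _ _
    _ = ENNReal.ofReal (∑ j ∈ Finset.range (N + 1),
          Real.sqrt (dyadicR (k + 1)) * ‖A.P (Sband c k ∩ Bband j) u‖) := by
        rw [Finset.mul_sum]
    _ = ∑ j ∈ Finset.range (N + 1),
          ENNReal.ofReal (Real.sqrt (dyadicR (k + 1)) * ‖A.P (Sband c k ∩ Bband j) u‖) :=
        ENNReal.ofReal_sum_of_nonneg fun i _ => by positivity
    _ ≤ _ := ENNReal.sum_le_tsum _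

lemma tsum_le_of_two_band (f : ℕ → ℝ≥0∞) (C : ℝ≥0∞) (L : ℝ) (hL : 0 < L)
    (h0 : f 0 = 0)
    (hb : ∀ k, f k ≤ ENNReal.ofReal (Real.sqrt (2 ^ k)) * C)
    (hsupp : ∀ k, f k ≠ 0 → L < 2 ^ k ∧ (2 : ℝ) ^ k < 4 * L) :
    ∑' k, f k ≤ ENNReal.ofReal ((2 + Real.sqrt 2) * Real.sqrt L) * C := by
  classical
  by_cases hz : ∀ k, f k = 0
  · simp [hz]
  push_neg at hz
  obtain ⟨k0, hk0⟩ := hz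
  obtain ⟨N, hN⟩ : ∃ N : ℕ, 4 * L ≤ 2 ^ N := by
    obtain ⟨N, h⟩ := pow_unbounded_of_one_lt (4 * L) one_lt_two
    exact ⟨N, h.le⟩
  have hbd : ∀ k, f k ≠ 0 → k ≤ N := by
    intro k hk
    by_contra hgt
    push_neg at hgt
    have h1 := (hsupp k hk).2
    have h2 : (2 : ℝ) ^ N ≤ 2 ^ k := pow_le_pow_right₀ one_le_two (by omega)
    linarith
  set M := Nat.findGreatest (fun k => f k ≠ 0) N with hMdef
  have hfM : f M ≠ 0 :=
    Nat.findGreatest_spec (P := fun k => f k ≠ 0) (hbd k0 hk0) hk0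
  have hM1 : 1 ≤ M := by
    rcases Nat.eq_zero_or_pos M with hM0 | h
    · rw [hM0] at hfM; exact absurd h0 hfM
    · exact h
  have h2M := hsupp M hfM
  have hout : ∀ k ∉ ({M - 1, M} : Finset ℕ), f k = 0 := by
    intro k hk
    simp only [Finset.mem_insert, Finset.mem_singleton] at hk
    push_neg at hk
    by_contra hfk
    have hkc := hsupp k hfk
    rcases Nat.lt_or_ge k M with hlt | hge
    · have hk2 : k ≤ M - 2 := by omega
      have h1 : (2 : ℝ) ^ k ≤ 2 ^ (M - 2) := pow_le_pow_right₀ one_le_two hk2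
      have h4 : (2 : ℝ) ^ (M - 2) * 4 = 2 ^ M := by
        have hM2 : M - 2 + 2 = M := by omega
        rw [← hM2, pow_add]
        norm_num
      nlinarith [hkc.1, h2M.2]
    · have hgt : M < k := lt_of_le_of_ne hge (Ne.symm hk.2)
      exact Nat.findGreatest_is_greatest (P := fun k => f k ≠ 0) hgt (hbd k hfk) hfk
  rw [tsum_eq_sum hout]
  have hMM : (M - 1) ≠ M := by omega
  rw [Finset.sum_insert (by simp [hMM]), Finset.sum_singleton]
  have e1 : f (M - 1) ≤ ENNReal.ofReal (Real.sqrt 2 * Real.sqrt L) * C := by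
    refine le_trans (hb (M - 1)) (mul_le_mul_left (ENNReal.ofReal_le_ofReal ?_) C)
    rw [← Real.sqrt_mul (by norm_num)]
    apply Real.sqrt_le_sqrt
    have hh : (2 : ℝ) ^ (M - 1) * 2 = 2 ^ M := by
      rw [← pow_succ]
      congr 1
      omega
    linarith [h2M.2]
  have e2 : f M ≤ ENNReal.ofReal (2 * Real.sqrt L) * C := by
    refine le_trans (hb M) (mul_le_mul_left (ENNReal.ofReal_le_ofReal ?_) C)
    calc Real.sqrt (2 ^ M) ≤ Real.sqrt (4 * L) := Real.sqrt_le_sqrt h2M.2.le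
      _ = 2 * Real.sqrt L := by
        rw [Real.sqrt_mul (by norm_num), show (4 : ℝ) = 2 ^ 2 by norm_num,
          Real.sqrt_sq (by norm_num)]
  calc f (M - 1) + f M ≤ ENNReal.ofReal (Real.sqrt 2 * Real.sqrt L) * C
        + ENNReal.ofReal (2 * Real.sqrt L) * C := add_le_add e1 e2
    _ = (ENNReal.ofReal (Real.sqrt 2 * Real.sqrt L) + ENNReal.ofReal (2 * Real.sqrt L)) * C := by
        rw [add_mul]
    _ = ENNReal.ofReal ((2 + Real.sqrt 2) * Real.sqrt L) * C := by
        rw [← ENNReal.ofReal_add (by positivity) (by positivity)]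
        congr 1
        ring_nf

lemma tsum_le_of_geom (f : ℕ → ℝ≥0∞) (C : ℝ≥0∞) (D : ℝ) (hD : 1 ≤ D)
    (hb : ∀ k, f k ≤ ENNReal.ofReal (Real.sqrt (2 ^ k)) * C)
    (hsupp : ∀ k, f k ≠ 0 → (2 : ℝ) ^ k < D) :
    ∑' k, f k ≤ ENNReal.ofReal ((2 + Real.sqrt 2) * Real.sqrt D) * C := by
  classical
  by_cases hz : ∀ k, f k = 0
  · simp [hz]
  push_neg at hz
  obtain ⟨k0, hk0⟩ := hz
  obtain ⟨N, hN⟩ : ∃ N : ℕ, D ≤ 2 ^ N := by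
    obtain ⟨N, h⟩ := pow_unbounded_of_one_lt D one_lt_two
    exact ⟨N, h.le⟩
  have hbd : ∀ k, f k ≠ 0 → k ≤ N := by
    intro k hk
    by_contra hgt
    push_neg at hgt
    have h1 := hsupp k hk
    have h2 : (2 : ℝ) ^ N ≤ 2 ^ k := pow_le_pow_right₀ one_le_two (by omega)
    linarith
  set M := Nat.findGreatest (fun k => f k ≠ 0) N with hMdef
  have hfM : f M ≠ 0 :=
    Nat.findGreatest_spec (P := fun k => f k ≠ 0) (hbd k0 hk0) hk0
  have h2M : (2 : ℝ) ^ M < D := hsupp M hfM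
  have hout : ∀ k ∉ Finset.range (M + 1), f k = 0 := by
    intro k hk
    simp only [Finset.mem_range, not_lt] at hk
    by_contra hfk
    exact Nat.findGreatest_is_greatest (P := fun k => f k ≠ 0) (by omega) (hbd k hfk) hfk
  rw [tsum_eq_sum hout]
  have hs2 : Real.sqrt 2 ^ 2 = 2 := Real.sq_sqrt (by norm_num)
  have h1s : 1 < Real.sqrt 2 := by nlinarith [Real.sqrt_nonneg 2]
  calc ∑ k ∈ Finset.range (M + 1), f k
      ≤ ∑ k ∈ Finset.range (M + 1), ENNReal.ofReal (Real.sqrt (2 ^ k)) * C :=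
        Finset.sum_le_sum fun k _ => hb k
    _ = (∑ k ∈ Finset.range (M + 1), ENNReal.ofReal (Real.sqrt (2 ^ k))) * C := by
        rw [Finset.sum_mul]
    _ = ENNReal.ofReal (∑ k ∈ Finset.range (M + 1), Real.sqrt (2 ^ k)) * C := by
        rw [ENNReal.ofReal_sum_of_nonneg fun i _ => Real.sqrt_nonneg _]
    _ ≤ ENNReal.ofReal ((2 + Real.sqrt 2) * Real.sqrt D) * C := by
        refine mul_le_mul_left (ENNReal.ofReal_le_ofReal ?_) C
        have hrw : ∑ k ∈ Finset.range (M + 1), Real.sqrt ((2 : ℝ) ^ k)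
            = (Real.sqrt 2 ^ (M + 1) - 1) / (Real.sqrt 2 - 1) := by
          rw [Finset.sum_congr rfl fun k _ => sqrt_two_pow k]
          exact geom_sum_eq (by linarith) (M + 1)
        rw [hrw, div_le_iff₀ (by linarith)]
        have hMD : Real.sqrt (2 ^ M) ≤ Real.sqrt D := Real.sqrt_le_sqrt h2M.le
        have hpow : Real.sqrt 2 ^ (M + 1) = Real.sqrt 2 * Real.sqrt (2 ^ M) := by
          rw [pow_succ, sqrt_two_pow, mul_comm]
        have hmul : Real.sqrt 2 * Real.sqrt (2 ^ M) ≤ Real.sqrt 2 * Real.sqrt D :=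
          mul_le_mul_of_nonneg_left hMD (Real.sqrt_nonneg 2)
        have hD0 : 1 ≤ Real.sqrt D := by
          rw [show (1:ℝ) = Real.sqrt 1 by simp]
          exact Real.sqrt_le_sqrt hD
        nlinarith [Real.sqrt_nonneg D]

lemma sqrt2_sq : Real.sqrt 2 ^ 2 = 2 := Real.sq_sqrt (by norm_num)

lemma one_le_sqrt2 : 1 ≤ Real.sqrt 2 := by nlinarith [Real.sqrt_nonneg 2, sqrt2_sq]

lemma sqrt2_le_two : Real.sqrt 2 ≤ 2 := by nlinarith [Real.sqrt_nonneg 2, sqrt2_sq]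

lemma SpectralMeasure.perj_succ (A : SpectralMeasure H) {c : ℝ} (hc : c ≠ 0) (u : H) (j : ℕ)
    (h0 : A.P (Sband c 0 ∩ Bband (j + 1)) u = 0) :
    (∑' k, ENNReal.ofReal (Real.sqrt (dyadicR (k + 1)) * ‖A.P (Sband c k ∩ Bband (j + 1)) u‖))
      ≤ ENNReal.ofReal (3 * Real.sqrt |c|) *
        ENNReal.ofReal (Real.sqrt (dyadicR (j + 1 + 1)) * ‖A.P (Bband (j + 1)) u‖) := by
  have ha : 0 < |c| := abs_pos.mpr hc
  set y : ℝ := ‖A.P (Bband (j + 1)) u‖ with hy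
  have hy0 : 0 ≤ y := norm_nonneg _
  have hL : (0:ℝ) < |c| * 2 ^ j := by positivity
  refine le_trans (tsum_le_of_two_band _ (ENNReal.ofReal y) (|c| * 2 ^ j) hL ?_ ?_ ?_) ?_
  · simp [h0]
  · intro k
    rw [dyadicR_succ, ← ENNReal.ofReal_mul (Real.sqrt_nonneg _)]
    exact ENNReal.ofReal_le_ofReal
      (mul_le_mul_of_nonneg_left (A.norm_proj_inter_le _ _ u) (Real.sqrt_nonneg _))
  · intro k hk
    have hne : (Sband c k ∩ Bband (j + 1)).Nonempty := by
      rcases (Sband c k ∩ Bband (j + 1)).eq_empty_or_nonempty with he | hne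
      · exfalso; apply hk; rw [he, A.empty]; simp
      · exact hne
    have hk0 : k ≠ 0 := by
      rintro rfl
      exact hk (by rw [h0]; simp)
    obtain ⟨k', rfl⟩ := Nat.exists_eq_succ_of_ne_zero hk0
    simp only [Nat.succ_eq_add_one]
    obtain ⟨t, ⟨hs1, hs2⟩, ⟨hb1, hb2⟩⟩ := hne
    rw [dyadicR_succ] at hs1 hs2 hb1 hb2
    rw [abs_mul] at hs1 hs2
    have e1 : (2:ℝ) ^ (k' + 1) = 2 ^ k' * 2 := pow_succ 2 k'
    have e2 : (2:ℝ) ^ (j + 1) = 2 ^ j * 2 := pow_succ 2 j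
    constructor
    · have h1 : |c| * 2 ^ j ≤ |c| * |t| := mul_le_mul_of_nonneg_left hb1 (abs_nonneg c)
      linarith
    · have h2 : |c| * |t| < |c| * (2 ^ j * 2) := by
        rw [← e2]
        exact mul_lt_mul_of_pos_left hb2 ha
      nlinarith
  · rw [← ENNReal.ofReal_mul (by positivity), ← ENNReal.ofReal_mul (by positivity)]
    apply ENNReal.ofReal_le_ofReal
    rw [dyadicR_succ]
    have h1 : Real.sqrt (|c| * 2 ^ j) = Real.sqrt |c| * Real.sqrt (2 ^ j) :=
      Real.sqrt_mul (abs_nonneg c) _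
    have h2 : Real.sqrt ((2:ℝ) ^ (j + 1)) = Real.sqrt 2 * Real.sqrt (2 ^ j) := by
      rw [pow_succ, mul_comm ((2:ℝ) ^ j) 2, Real.sqrt_mul (by norm_num)]
    rw [h1, h2]
    have hX : (0:ℝ) ≤ Real.sqrt |c| * Real.sqrt (2 ^ j) * y := by positivity
    nlinarith [mul_nonneg (by nlinarith [one_le_sqrt2] :
      (0:ℝ) ≤ 3 * Real.sqrt 2 - (2 + Real.sqrt 2)) hX]

lemma SpectralMeasure.proj_S0_zero (A : SpectralMeasure H) {c : ℝ} {u : H}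
    (hE : A.P {t : ℝ | 1 ≤ |c * t|} u = u) (T : Set ℝ) :
    A.P (Sband c 0 ∩ T) u = 0 := by
  have hdisj : (Sband c 0 ∩ T) ∩ {t : ℝ | 1 ≤ |c * t|} = ∅ := by
    ext t
    simp only [Sband, Set.mem_inter_iff, Set.mem_setOf_eq, Set.mem_empty_iff_false, iff_false,
      not_and]
    rintro ⟨⟨_, h2⟩, _⟩
    rw [dyadicR_succ] at h2
    norm_num at h2
    intro h3
    linarith [abs_mul c t]
  conv_lhs => rw [← hE, ← A.proj_inter_apply, hdisj, A.empty]
  rfl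

lemma Sband_succ_inter_B0_empty {c : ℝ} (hle : |c| ≤ 1) (k' : ℕ) :
    Sband c (k' + 1) ∩ Bband 0 = ∅ := by
  ext t
  simp only [Sband, Bband, Set.mem_inter_iff, Set.mem_setOf_eq, Set.mem_empty_iff_false,
    iff_false, not_and]
  rintro ⟨h1, _⟩ _ h4
  rw [dyadicR_succ] at h1
  rw [dyadicR_succ] at h4
  rw [abs_mul] at h1
  have hp : (1:ℝ) ≤ 2 ^ k' := one_le_pow₀ one_le_two
  nlinarith [abs_nonneg t, abs_nonneg c]

lemma S0_inter_B_succ_empty {c : ℝ} (hgt : 1 < |c|) (j : ℕ) :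
    Sband c 0 ∩ Bband (j + 1) = ∅ := by
  ext t
  simp only [Sband, Bband, Set.mem_inter_iff, Set.mem_setOf_eq, Set.mem_empty_iff_false,
    iff_false, not_and]
  rintro ⟨_, h2⟩ h3 _
  rw [dyadicR_succ] at h2 h3
  rw [abs_mul] at h2
  norm_num at h2
  have hp : (1:ℝ) ≤ 2 ^ j := one_le_pow₀ one_le_two
  nlinarith [abs_nonneg t]

lemma SpectralMeasure.perj_zero_big (A : SpectralMeasure H) {c : ℝ} (hgt : 1 < |c|) (u : H) :
    (∑' k, ENNReal.ofReal (Real.sqrt (dyadicR (k + 1)) * ‖A.P (Sband c k ∩ Bband 0) u‖))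
      ≤ ENNReal.ofReal (8 * Real.sqrt |c|) *
        ENNReal.ofReal (Real.sqrt (dyadicR 1) * ‖A.P (Bband 0) u‖) := by
  set y : ℝ := ‖A.P (Bband 0) u‖ with hy
  have hy0 : 0 ≤ y := norm_nonneg _
  refine le_trans (tsum_le_of_geom _ (ENNReal.ofReal y) (2 * |c|) (by linarith) ?_ ?_) ?_
  · intro k
    rw [dyadicR_succ, ← ENNReal.ofReal_mul (Real.sqrt_nonneg _)]
    exact ENNReal.ofReal_le_ofReal
      (mul_le_mul_of_nonneg_left (A.norm_proj_inter_le _ _ u) (Real.sqrt_nonneg _))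
  · intro k hk
    have hne : (Sband c k ∩ Bband 0).Nonempty := by
      rcases (Sband c k ∩ Bband 0).eq_empty_or_nonempty with he | hne
      · exfalso; apply hk; rw [he, A.empty]; simp
      · exact hne
    cases k with
    | zero => norm_num; linarith
    | succ k' =>
      obtain ⟨t, ⟨hs1, hs2⟩, ⟨_, hb2⟩⟩ := hne
      rw [dyadicR_succ] at hs1
      rw [dyadicR_succ] at hb2
      rw [abs_mul] at hs1
      have e1 : (2:ℝ) ^ (k' + 1) = 2 ^ k' * 2 := pow_succ 2 k'
      norm_num at hb2
      nlinarith [abs_nonneg c]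
  · rw [← ENNReal.ofReal_mul (by positivity), ← ENNReal.ofReal_mul (by positivity)]
    apply ENNReal.ofReal_le_ofReal
    have h1 : Real.sqrt (2 * |c|) = Real.sqrt 2 * Real.sqrt |c| := Real.sqrt_mul (by norm_num) _
    have h2 : Real.sqrt (dyadicR 1) = 1 := by
      rw [dyadicR_succ]
      norm_num
    rw [h1, h2]
    have hX : (0:ℝ) ≤ Real.sqrt |c| * y := by positivity
    nlinarith [mul_nonneg (by nlinarith [sqrt2_le_two, one_le_sqrt2] :
      (0:ℝ) ≤ 8 - (2 + Real.sqrt 2) * Real.sqrt 2) hX]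

/-- if `u ∈ B(A)` and either `|c| > 1` or `u = F(|cA| ≥ 1)u`, then
`u ∈ B(cA)` with `‖u‖_{B(cA)} ≤ 8 |c|^{1/2} ‖u‖_{B(A)}`; moreover in the case
`|c| ≤ 1` (with `u = F(|cA| ≥ 1)u`) one has the sharper bound with constant `3 |c|^{1/2}`. -/
theorem stmt5 (A : SpectralMeasure H) (c : ℝ) (u : H)
    (hu : A.besov u ≠ ⊤)
    (h : 1 < |c| ∨ A.P {t : ℝ | 1 ≤ |c * t|} u = u) :
    A.besovScaled c u ≠ ⊤ ∧
    A.besovScaled c u ≤ ENNReal.ofReal (8 * Real.sqrt |c|) * A.besov u ∧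
    (|c| ≤ 1 → A.besovScaled c u ≤ ENNReal.ofReal (3 * Real.sqrt |c|) * A.besov u) := by
  rcases eq_or_ne c 0 with rfl | hc
  · have hu0 : u = 0 := by
      rcases h with habs | hproj
      · exact absurd habs (by norm_num)
      · rw [← hproj, show {t : ℝ | 1 ≤ |0 * t|} = ∅ from by ext t; simp, A.empty]
        rfl
    have hbs : A.besovScaled 0 u = 0 := by
      simp [SpectralMeasure.besovScaled, hu0]
    rw [hbs]
    exact ⟨by simp, by simp, fun _ => by simp⟩
  · have ha : 0 < |c| := abs_pos.mpr hc
    have hsa : 0 < Real.sqrt |c| := Real.sqrt_pos.mpr ha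
    have hkey : A.besovScaled c u ≤ ∑' (j : ℕ) (k : ℕ),
        ENNReal.ofReal (Real.sqrt (dyadicR (k + 1)) * ‖A.P (Sband c k ∩ Bband j) u‖) := by
      refine le_trans (le_of_eq (rfl :
        A.besovScaled c u = ∑' k, ENNReal.ofReal
          (Real.sqrt (dyadicR (k + 1)) * ‖A.P (Sband c k) u‖))) ?_
      refine le_trans (ENNReal.tsum_le_tsum fun k => A.scaled_term_le hc u k) ?_
      exact le_of_eq ENNReal.tsum_comm
    have hbesov : A.besov u = ∑' j, ENNReal.ofReal
        (Real.sqrt (dyadicR (j + 1)) * ‖A.P (Bband j) u‖) := rfl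
    rcases le_or_gt |c| 1 with hle | hgt
    · -- sharp case
      have hE : A.P {t : ℝ | 1 ≤ |c * t|} u = u := by
        rcases h with habs | hproj
        · linarith
        · exact hproj
      have hperj : ∀ j : ℕ, (∑' k, ENNReal.ofReal
            (Real.sqrt (dyadicR (k + 1)) * ‖A.P (Sband c k ∩ Bband j) u‖))
          ≤ ENNReal.ofReal (3 * Real.sqrt |c|) *
            ENNReal.ofReal (Real.sqrt (dyadicR (j + 1)) * ‖A.P (Bband j) u‖) := by
        intro j
        cases j with
        | zero =>
          have hz : ∀ k, A.P (Sband c k ∩ Bband 0) u = 0 := by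
            intro k
            cases k with
            | zero => exact A.proj_S0_zero hE _
            | succ k' =>
              rw [Sband_succ_inter_B0_empty hle k', A.empty]
              rfl
          simp only [hz, norm_zero, mul_zero, ENNReal.ofReal_zero, tsum_zero]
          exact zero_le
        | succ j => exact A.perj_succ hc u j (A.proj_S0_zero hE _)
      have h3 : A.besovScaled c u ≤ ENNReal.ofReal (3 * Real.sqrt |c|) * A.besov u := by
        refine hkey.trans ?_
        rw [hbesov, ← ENNReal.tsum_mul_left]
        exact ENNReal.tsum_le_tsum hperj
      have h8 : A.besovScaled c u ≤ ENNReal.ofReal (8 * Real.sqrt |c|) * A.besov u :=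
        h3.trans (mul_le_mul_left
          (ENNReal.ofReal_le_ofReal (by nlinarith)) _)
      exact ⟨ne_top_of_le_ne_top (ENNReal.mul_ne_top ENNReal.ofReal_ne_top hu) h8,
        h8, fun _ => h3⟩
    · -- |c| > 1
      have hperj : ∀ j : ℕ, (∑' k, ENNReal.ofReal
            (Real.sqrt (dyadicR (k + 1)) * ‖A.P (Sband c k ∩ Bband j) u‖))
          ≤ ENNReal.ofReal (8 * Real.sqrt |c|) *
            ENNReal.ofReal (Real.sqrt (dyadicR (j + 1)) * ‖A.P (Bband j) u‖) := by
        intro j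
        cases j with
        | zero => exact A.perj_zero_big hgt u
        | succ j =>
          refine le_trans (A.perj_succ hc u j ?_) (mul_le_mul_left
            (ENNReal.ofReal_le_ofReal (by nlinarith)) _)
          rw [S0_inter_B_succ_empty hgt j, A.empty]
          rfl
      have h8 : A.besovScaled c u ≤ ENNReal.ofReal (8 * Real.sqrt |c|) * A.besov u := by
        refine hkey.trans ?_
        rw [hbesov, ← ENNReal.tsum_mul_left]
        exact ENNReal.tsum_le_tsum hperj
      exact ⟨ne_top_of_le_ne_top (ENNReal.mul_ne_top ENNReal.ofReal_ne_top hu) h8,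
        h8, fun hle => absurd hle (not_le.mpr hgt)⟩
end
end

section
/- Let A be a self-adjoint operator on a Hilbert space H and let T ∈ B(H) be accretive, i.e. T + T* ≥ 0. Suppose there are constants C₁, C₂, C₃ such that uniformly in n ∈ ℤ: ‖F(n ≤ A < n+1) T F(n ≤ A < n+1)‖ ≤ C₁, ‖F(A < n) T F(n ≤ A < n+1)‖ ≤ C₂, and ‖F(n ≤ A < n+1) T F(A ≥ n)‖ ≤ C₃. Then for all m, n ∈ ℤ, ‖F(m ≤ A < m+1) T F(n ≤ A < n+1)‖ ≤ 2C₁ + C₂ + C₃. -/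
open scoped InnerProductSpace ENNReal

noncomputable section

variable {H : Type*} [NormedAddCommGroup H] [InnerProductSpace ℂ H] [CompleteSpace H]

/-- The unit spectral band `{t | n ≤ t < n+1}` for `n ∈ ℤ`. -/
def unitBand (n : ℤ) : Set ℝ := {t : ℝ | (n : ℝ) ≤ t ∧ t < (n : ℝ) + 1}


lemma SpectralMeasure.idem (A : SpectralMeasure H) (S : Set ℝ) (u : H) :
    A.P S (A.P S u) = A.P S u := by
  have := ContinuousLinearMap.ext_iff.1 (A.inter S S) u
  simpa [Set.inter_self] using this

lemma SpectralMeasure.norm_P_apply_le (A : SpectralMeasure H) (S : Set ℝ) (u : H) :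
    ‖A.P S u‖ ≤ ‖u‖ := by
  have h1 : ⟪A.P S u, A.P S u⟫_ℂ = ⟪u, A.P S u⟫_ℂ := by
    rw [A.symm S u (A.P S u), A.idem]
  have h2 : ‖A.P S u‖ ^ 2 = (⟪u, A.P S u⟫_ℂ).re := by
    rw [← h1]
    simpa using (inner_self_eq_norm_sq (𝕜 := ℂ) (A.P S u)).symm
  have h3 : (⟪u, A.P S u⟫_ℂ).re ≤ ‖u‖ * ‖A.P S u‖ := by
    calc (⟪u, A.P S u⟫_ℂ).re ≤ ‖⟪u, A.P S u⟫_ℂ‖ := Complex.re_le_norm _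
      _ ≤ ‖u‖ * ‖A.P S u‖ := norm_inner_le_norm _ _
  by_cases h : ‖A.P S u‖ = 0
  · simpa [h] using norm_nonneg u
  · have hpos : 0 < ‖A.P S u‖ := lt_of_le_of_ne (norm_nonneg _) (Ne.symm h)
    nlinarith [h2, h3]

lemma SpectralMeasure.norm_P_le_one (A : SpectralMeasure H) (S : Set ℝ) :
    ‖A.P S‖ ≤ 1 := ContinuousLinearMap.opNorm_le_bound _ zero_le_one
  (fun u => by simpa using A.norm_P_apply_le S u)

lemma SpectralMeasure.adjoint_P (A : SpectralMeasure H) (S : Set ℝ) :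
    ContinuousLinearMap.adjoint (A.P S) = A.P S := by
  symm
  rw [ContinuousLinearMap.eq_adjoint_iff]
  exact fun x y => A.symm S x y

/-- Cauchy–Schwarz for a positive self-adjoint bounded operator `S`. -/
lemma cs_positive (S : H →L[ℂ] H)
    (hsym : ∀ x y : H, ⟪S x, y⟫_ℂ = ⟪x, S y⟫_ℂ)
    (hpos : ∀ x : H, 0 ≤ (⟪x, S x⟫_ℂ).re) (x y : H) :
    ‖⟪x, S y⟫_ℂ‖ ^ 2 ≤ (⟪x, S x⟫_ℂ).re * (⟪y, S y⟫_ℂ).re := by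
  let c : PreInnerProductSpace.Core ℂ H :=
    { inner := fun u v => ⟪u, S v⟫_ℂ
      conj_inner_symm := fun u v => by
        change (starRingEnd ℂ) ⟪v, S u⟫_ℂ = ⟪u, S v⟫_ℂ
        rw [inner_conj_symm, hsym]
      re_inner_nonneg := hpos
      add_left := fun u v w => inner_add_left _ _ _
      smul_left := fun u v r => inner_smul_left _ _ _ }
  have := @InnerProductSpace.Core.inner_mul_inner_self_le ℂ H _ _ _ c x y
  have hxy : (c.inner y x) = (starRingEnd ℂ) (c.inner x y) := (c.conj_inner_symm y x).symm
  have hnorm : ‖c.inner y x‖ = ‖c.inner x y‖ := by rw [hxy, RCLike.norm_conj]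
  rw [hnorm] at this
  calc ‖⟪x, S y⟫_ℂ‖ ^ 2 = ‖c.inner x y‖ * ‖c.inner x y‖ := by
        rw [sq]; rfl
    _ ≤ RCLike.re (c.inner x x) * RCLike.re (c.inner y y) := this
    _ = (⟪x, S x⟫_ℂ).re * (⟪y, S y⟫_ℂ).re := rfl

/-- if `T` is bounded and accretive (`Re⟨u, Tu⟩ ≥ 0`), and the diagonal,
lower and upper block bounds `C₁, C₂, C₃` hold uniformly in `n ∈ ℤ`, then every block
`F(m ≤ A < m+1) T F(n ≤ A < n+1)` is bounded by `2C₁ + C₂ + C₃`. -/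
theorem stmt7 (A : SpectralMeasure H) (T : H →L[ℂ] H)
    (hacc : ∀ u : H, 0 ≤ (⟪u, T u⟫_ℂ).re)
    (C₁ C₂ C₃ : ℝ)
    (h1 : ∀ n : ℤ, ‖(A.P (unitBand n)).comp (T.comp (A.P (unitBand n)))‖ ≤ C₁)
    (h2 : ∀ n : ℤ, ‖(A.P {t : ℝ | t < (n : ℝ)}).comp (T.comp (A.P (unitBand n)))‖ ≤ C₂)
    (h3 : ∀ n : ℤ, ‖(A.P (unitBand n)).comp (T.comp (A.P {t : ℝ | (n : ℝ) ≤ t}))‖ ≤ C₃) :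
    ∀ m n : ℤ,
      ‖(A.P (unitBand m)).comp (T.comp (A.P (unitBand n)))‖ ≤ 2 * C₁ + C₂ + C₃ := by
  have hC₁ : 0 ≤ C₁ := le_trans (norm_nonneg _) (h1 0)
  have hC₂ : 0 ≤ C₂ := le_trans (norm_nonneg _) (h2 0)
  have hC₃ : 0 ≤ C₃ := le_trans (norm_nonneg _) (h3 0)
  -- the main off-diagonal estimate for m > n, via adjoints
  intro m n
  rcases lt_trichotomy m n with hmn | hmn | hmn
  · -- m < n : factor through P {t < n}
    have hsub : unitBand m ∩ {t : ℝ | t < (n : ℝ)} = unitBand m := by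
      ext t
      simp only [unitBand, Set.mem_inter_iff, Set.mem_setOf_eq, and_iff_left_iff_imp]
      rintro ⟨_, h₂⟩
      have : (m : ℝ) + 1 ≤ (n : ℝ) := by exact_mod_cast hmn
      linarith
    have hcomp : ∀ x : H, A.P (unitBand m) (A.P {t : ℝ | t < (n : ℝ)} x) =
        A.P (unitBand m) x := by
      intro x
      have := ContinuousLinearMap.ext_iff.1 (A.inter (unitBand m) {t : ℝ | t < (n : ℝ)}) x
      rw [hsub] at this
      simpa using this
    have key : (A.P (unitBand m)).comp (T.comp (A.P (unitBand n))) =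
        (A.P (unitBand m)).comp ((A.P {t : ℝ | t < (n : ℝ)}).comp
          (T.comp (A.P (unitBand n)))) := by
      ext u
      simp [ContinuousLinearMap.comp_apply, hcomp]
    rw [key]
    calc ‖(A.P (unitBand m)).comp ((A.P {t : ℝ | t < (n : ℝ)}).comp
          (T.comp (A.P (unitBand n))))‖
        ≤ ‖A.P (unitBand m)‖ * ‖(A.P {t : ℝ | t < (n : ℝ)}).comp
          (T.comp (A.P (unitBand n)))‖ := ContinuousLinearMap.opNorm_comp_le _ _
      _ ≤ 1 * C₂ := by
          apply mul_le_mul (A.norm_P_le_one _) (h2 n) (norm_nonneg _) zero_le_one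
      _ ≤ 2 * C₁ + C₂ + C₃ := by linarith
  · -- m = n
    subst hmn
    linarith [h1 m]
  · -- m > n : adjoint trick
    set Pm := A.P (unitBand m) with hPm
    set Pn := A.P (unitBand n) with hPn
    set Td := ContinuousLinearMap.adjoint T with hTd
    set S := T + Td with hS
    -- S is symmetric and positive
    have hSsym : ∀ x y : H, ⟪S x, y⟫_ℂ = ⟪x, S y⟫_ℂ := by
      intro x y
      simp only [hS, ContinuousLinearMap.add_apply, inner_add_left, inner_add_right, hTd,
        ContinuousLinearMap.adjoint_inner_left, ContinuousLinearMap.adjoint_inner_right]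
      ring
    have hSpos : ∀ x : H, 0 ≤ (⟪x, S x⟫_ℂ).re := by
      intro x
      have : ⟪x, S x⟫_ℂ = ⟪x, T x⟫_ℂ + ⟪T x, x⟫_ℂ := by
        simp [hS, hTd, inner_add_right, ContinuousLinearMap.adjoint_inner_right]
      rw [this]
      have h' : (⟪T x, x⟫_ℂ).re = (⟪x, T x⟫_ℂ).re := by
        simpa using inner_re_symm (𝕜 := ℂ) (T x) x
      simp only [Complex.add_re, h']
      linarith [hacc x]
    -- diagonal bound : re ⟪P u, S (P u)⟫ ≤ 2 C₁ ‖u‖² for P = Pn or Pm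
    have diag : ∀ (k : ℤ) (u : H),
        (⟪A.P (unitBand k) u, S (A.P (unitBand k) u)⟫_ℂ).re ≤ 2 * C₁ * ‖u‖ ^ 2 := by
      intro k u
      set P := A.P (unitBand k)
      have e1 : ⟪P u, T (P u)⟫_ℂ = ⟪u, (P.comp (T.comp P)) u⟫_ℂ := by
        rw [A.symm]; rfl
      have b1 : (⟪P u, T (P u)⟫_ℂ).re ≤ C₁ * ‖u‖ ^ 2 := by
        rw [e1]
        calc (⟪u, (P.comp (T.comp P)) u⟫_ℂ).re ≤ ‖⟪u, (P.comp (T.comp P)) u⟫_ℂ‖ :=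
              Complex.re_le_norm _
          _ ≤ ‖u‖ * ‖(P.comp (T.comp P)) u‖ := norm_inner_le_norm _ _
          _ ≤ ‖u‖ * (‖P.comp (T.comp P)‖ * ‖u‖) := by
              gcongr; exact ContinuousLinearMap.le_opNorm _ _
          _ ≤ ‖u‖ * (C₁ * ‖u‖) :=
              mul_le_mul_of_nonneg_left
                (mul_le_mul_of_nonneg_right (h1 k) (norm_nonneg u)) (norm_nonneg u)
          _ = C₁ * ‖u‖ ^ 2 := by ring
      have e2 : (⟪P u, Td (P u)⟫_ℂ).re = (⟪P u, T (P u)⟫_ℂ).re := by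
        rw [hTd, ContinuousLinearMap.adjoint_inner_right]
        simpa using inner_re_symm (𝕜 := ℂ) (T (P u)) (P u)
      have : ⟪P u, S (P u)⟫_ℂ = ⟪P u, T (P u)⟫_ℂ + ⟪P u, Td (P u)⟫_ℂ := by
        simp [hS, inner_add_right]
      rw [this]
      simp only [Complex.add_re, e2]
      linarith
    -- bound on ‖Pn ∘ S ∘ Pm‖
    have hSblock : ‖Pn.comp (S.comp Pm)‖ ≤ 2 * C₁ := by
      apply ContinuousLinearMap.opNorm_le_bound _ (by linarith)
      intro v
      have key : ∀ u : H, ‖⟪u, (Pn.comp (S.comp Pm)) v⟫_ℂ‖ ≤ 2 * C₁ * (‖u‖ * ‖v‖) := by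
        intro u
        have e : ⟪u, (Pn.comp (S.comp Pm)) v⟫_ℂ = ⟪Pn u, S (Pm v)⟫_ℂ :=
          (A.symm (unitBand n) u (S (Pm v))).symm
        rw [e]
        have hcs := cs_positive S hSsym hSpos (Pn u) (Pm v)
        have d1 := diag n u
        have d2 := diag m v
        have hn : 0 ≤ ‖⟪Pn u, S (Pm v)⟫_ℂ‖ := norm_nonneg _
        nlinarith [norm_nonneg u, norm_nonneg v, hSpos (Pn u), hSpos (Pm v), mul_nonneg hC₁ (mul_nonneg (norm_nonneg u) (norm_nonneg v))]
      by_cases hz : ‖(Pn.comp (S.comp Pm)) v‖ = 0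
      · rw [hz]; positivity
      · have hpos : 0 < ‖(Pn.comp (S.comp Pm)) v‖ :=
          lt_of_le_of_ne (norm_nonneg _) (Ne.symm hz)
        have := key ((Pn.comp (S.comp Pm)) v)
        have hsq : ‖(Pn.comp (S.comp Pm)) v‖ ^ 2 =
            (⟪(Pn.comp (S.comp Pm)) v, (Pn.comp (S.comp Pm)) v⟫_ℂ).re := by
          simpa using (inner_self_eq_norm_sq (𝕜 := ℂ) ((Pn.comp (S.comp Pm)) v)).symm
        have hre : (⟪(Pn.comp (S.comp Pm)) v, (Pn.comp (S.comp Pm)) v⟫_ℂ).re ≤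
            ‖⟪(Pn.comp (S.comp Pm)) v, (Pn.comp (S.comp Pm)) v⟫_ℂ‖ := Complex.re_le_norm _
        nlinarith
    -- bound on ‖Pn ∘ T ∘ Pm‖ via h3
    have hTblock : ‖Pn.comp (T.comp Pm)‖ ≤ C₃ := by
      have hsub : {t : ℝ | (n : ℝ) ≤ t} ∩ unitBand m = unitBand m := by
        ext t
        simp only [unitBand, Set.mem_inter_iff, Set.mem_setOf_eq, and_iff_right_iff_imp]
        rintro ⟨h₁, _⟩
        have : (n : ℝ) ≤ (m : ℝ) := by exact_mod_cast le_of_lt hmn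
        linarith
      have key : Pn.comp (T.comp Pm) =
          (Pn.comp (T.comp (A.P {t : ℝ | (n : ℝ) ≤ t}))).comp Pm := by
        rw [hPm]
        conv_lhs => rw [← hsub, ← A.inter]
        ext u
        simp [ContinuousLinearMap.comp_apply]
      rw [key]
      calc ‖(Pn.comp (T.comp (A.P {t : ℝ | (n : ℝ) ≤ t}))).comp Pm‖
          ≤ ‖Pn.comp (T.comp (A.P {t : ℝ | (n : ℝ) ≤ t}))‖ * ‖Pm‖ :=
            ContinuousLinearMap.opNorm_comp_le _ _
        _ ≤ C₃ * 1 := mul_le_mul (h3 n) (A.norm_P_le_one _) (norm_nonneg _) hC₃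
        _ = C₃ := mul_one _
    -- adjoint identity
    have hadj : ContinuousLinearMap.adjoint (Pm.comp (T.comp Pn)) =
        Pn.comp (S.comp Pm) - Pn.comp (T.comp Pm) := by
      rw [ContinuousLinearMap.adjoint_comp, ContinuousLinearMap.adjoint_comp,
        A.adjoint_P, A.adjoint_P, ← hTd, ← hPn, ← hPm]
      have : Td = S - T := by rw [hS]; abel
      rw [this]
      ext u
      simp [ContinuousLinearMap.comp_apply, ContinuousLinearMap.sub_apply, map_sub]
    have hnorm : ‖Pm.comp (T.comp Pn)‖ =
        ‖ContinuousLinearMap.adjoint (Pm.comp (T.comp Pn))‖ :=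
      (ContinuousLinearMap.adjoint.norm_map _).symm
    calc ‖Pm.comp (T.comp Pn)‖
        = ‖Pn.comp (S.comp Pm) - Pn.comp (T.comp Pm)‖ := by rw [hnorm, hadj]
      _ ≤ ‖Pn.comp (S.comp Pm)‖ + ‖Pn.comp (T.comp Pm)‖ := norm_sub_le _ _
      _ ≤ 2 * C₁ + C₃ := add_le_add hSblock hTblock
      _ ≤ 2 * C₁ + C₂ + C₃ := by linarith
end
end

section
/- Let A₁, A₂ be self-adjoint operators on Hilbert spaces H₁, H₂, and s > 1/2. Suppose T is bounded from H₁ to H₂ and bounded from ⟨A₁⟩^{-s}H₁ to ⟨A₂⟩^{-s}H₂ (i.e. ⟨A₂⟩^s T ⟨A₁⟩^{-s} is bounded). Then T is bounded from B(A₁) to B(A₂), and there is a constant C = C(s) independent of T with ‖T‖_{B(B(A₁),B(A₂))} ≤ C(‖T‖_{B(H₁,H₂)} + ‖⟨A₂⟩^s T ⟨A₁⟩^{-s}‖_{B(H₁,H₂)}). -/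
open MeasureTheory Filter Topology
open scoped ENNReal

noncomputable section

namespace Stmt8

lemma dyadicR_nonneg (k : ℕ) : 0 ≤ dyadicR k := by
  cases k with
  | zero => simp [dyadicR]
  | succ k => simp only [dyadicR]; positivity

lemma dyadicR_mono : Monotone dyadicR := by
  apply monotone_nat_of_le_succ
  intro n
  cases n with
  | zero => simp [dyadicR]
  | succ k =>
    simp only [dyadicR]
    exact pow_le_pow_right₀ one_le_two (Nat.le_succ k)

/-- The spectral block sets. -/
def blkS {α : Type*} (a : α → ℝ) (k : ℕ) : Set α :=
  {x | dyadicR k ≤ |a x| ∧ |a x| < dyadicR (k + 1)}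

lemma measurableSet_blkS {α : Type*} [MeasurableSpace α] {a : α → ℝ} (ha : Measurable a)
    (k : ℕ) : MeasurableSet (blkS a k) := by
  have h1 : Measurable fun x => |a x| := ha.abs
  exact (measurableSet_le measurable_const h1).inter (measurableSet_lt h1 measurable_const)

lemma disjoint_blkS {α : Type*} (a : α → ℝ) :
    Pairwise (Function.onFun Disjoint (blkS a)) := by
  intro i j hij
  wlog h : i < j generalizing i j
  · exact (this hij.symm (by omega)).symm
  refine Set.disjoint_left.2 fun x hxi hxj => ?_
  have h1 : dyadicR (i + 1) ≤ dyadicR j := dyadicR_mono (by omega)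
  have := hxi.2
  have := hxj.1
  simp only [blkS, Set.mem_setOf_eq] at *
  linarith [hxi.2, hxj.1]

lemma exists_mem_blkS {α : Type*} (a : α → ℝ) (x : α) : ∃ k, x ∈ blkS a k := by
  have hex : ∃ n : ℕ, |a x| < dyadicR (n + 1) := by
    obtain ⟨n, hn⟩ := pow_unbounded_of_one_lt |a x| (by norm_num : (1:ℝ) < 2)
    exact ⟨n, by simpa [dyadicR] using hn⟩
  classical
  refine ⟨Nat.find hex, ?_, Nat.find_spec hex⟩
  rcases hk : Nat.find hex with _ | m
  · rw [show dyadicR 0 = 0 from rfl]; exact abs_nonneg (a x)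
  · have hm := Nat.find_min hex (by omega : m < Nat.find hex)
    rw [hk] at *
    exact not_lt.1 hm

lemma iUnion_low {α : Type*} (a : α → ℝ) (m : ℕ) :
    (⋃ j, if j < m then blkS a j else (∅ : Set α)) = {x | |a x| < dyadicR m} := by
  ext x
  simp only [Set.mem_iUnion, Set.mem_setOf_eq]
  constructor
  · rintro ⟨j, hj⟩
    by_cases h : j < m
    · rw [if_pos h] at hj
      exact lt_of_lt_of_le hj.2 (dyadicR_mono h)
    · rw [if_neg h] at hj; exact absurd hj (Set.notMem_empty x)
  · intro hx
    obtain ⟨k, hk⟩ := exists_mem_blkS a x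
    have hkm : k < m := by
      by_contra h
      have := dyadicR_mono (not_lt.1 h)
      have := hk.1
      simp only [blkS, Set.mem_setOf_eq] at *
      linarith [hk.1]
    exact ⟨k, by rw [if_pos hkm]; exact hk⟩

lemma iUnion_high {α : Type*} (a : α → ℝ) (m : ℕ) :
    (⋃ j, if m ≤ j then blkS a j else (∅ : Set α)) = {x | dyadicR m ≤ |a x|} := by
  ext x
  simp only [Set.mem_iUnion, Set.mem_setOf_eq]
  constructor
  · rintro ⟨j, hj⟩
    by_cases h : m ≤ j
    · rw [if_pos h] at hj
      exact le_trans (dyadicR_mono h) hj.1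
    · rw [if_neg h] at hj; exact absurd hj (Set.notMem_empty x)
  · intro hx
    obtain ⟨k, hk⟩ := exists_mem_blkS a x
    have hkm : m ≤ k := by
      by_contra h
      have h2 : dyadicR (k + 1) ≤ dyadicR m := dyadicR_mono (by omega)
      simp only [blkS, Set.mem_setOf_eq] at hk
      linarith [hk.2]
    exact ⟨k, by rw [if_pos hkm]; exact hk⟩

lemma tsum_rpow_half_le (x : ℕ → ℝ≥0∞) :
    (∑' j, x j) ^ (1/2 : ℝ) ≤ ∑' j, (x j) ^ (1/2 : ℝ) := by
  have hsq : ∀ y : ℝ≥0∞, (y ^ (1/2:ℝ)) ^ (2:ℕ) = y := fun y => by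
    rw [← ENNReal.rpow_natCast (y ^ (1/2:ℝ)) 2, ← ENNReal.rpow_mul]
    norm_num
  have h : ∑' j, x j ≤ (∑' j, (x j) ^ (1/2:ℝ)) ^ (2:ℕ) := by
    calc ∑' j, x j ≤ ∑' j, (x j) ^ (1/2:ℝ) * ∑' i, (x i) ^ (1/2:ℝ) := by
          refine ENNReal.tsum_le_tsum fun j => ?_
          conv_lhs => rw [← hsq (x j)]
          rw [pow_two]
          exact mul_le_mul_right (ENNReal.le_tsum j) _
      _ = (∑' j, (x j) ^ (1/2:ℝ)) ^ (2:ℕ) := by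
          rw [ENNReal.tsum_mul_right, pow_two]
  calc (∑' j, x j) ^ (1/2:ℝ) ≤ ((∑' j, (x j) ^ (1/2:ℝ)) ^ (2:ℕ)) ^ (1/2:ℝ) :=
        ENNReal.rpow_le_rpow h (by norm_num)
    _ = ∑' j, (x j) ^ (1/2:ℝ) := by
        rw [← ENNReal.rpow_natCast (∑' j, (x j) ^ (1/2:ℝ)) 2, ← ENNReal.rpow_mul]
        norm_num

lemma eLpNorm_indicator_eq_lintegral {α : Type*} [MeasurableSpace α] (μ : Measure α)
    (f : α → ℂ) {s : Set α} (hs : MeasurableSet s) :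
    eLpNorm (s.indicator f) 2 μ
      = (∫⁻ x in s, (‖f x‖₊ : ℝ≥0∞) ^ (2:ℝ) ∂μ) ^ (1/2 : ℝ) := by
  rw [eLpNorm_eq_lintegral_rpow_enorm_toReal (by norm_num) (by norm_num)]
  simp only [ENNReal.toReal_ofNat]
  rw [← lintegral_indicator hs]
  congr 1
  refine lintegral_congr fun x => ?_
  by_cases hx : x ∈ s
  · simp [Set.indicator_of_mem hx]; rfl
  · simp [Set.indicator_of_notMem hx,
      ENNReal.zero_rpow_of_pos (by norm_num : (0:ℝ) < 2)]

lemma eLpNorm_indicator_iUnion_le {α : Type*} [MeasurableSpace α] (μ : Measure α)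
    (f : α → ℂ) (S : ℕ → Set α) (hm : ∀ j, MeasurableSet (S j))
    (hd : Pairwise (Function.onFun Disjoint S)) :
    eLpNorm ((⋃ j, S j).indicator f) 2 μ ≤ ∑' j, eLpNorm ((S j).indicator f) 2 μ := by
  rw [eLpNorm_indicator_eq_lintegral μ f (MeasurableSet.iUnion hm), lintegral_iUnion hm hd]
  calc (∑' j, ∫⁻ x in S j, (‖f x‖₊ : ℝ≥0∞) ^ (2:ℝ) ∂μ) ^ (1/2:ℝ)
      ≤ ∑' j, (∫⁻ x in S j, (‖f x‖₊ : ℝ≥0∞) ^ (2:ℝ) ∂μ) ^ (1/2:ℝ) := tsum_rpow_half_le _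
    _ = ∑' j, eLpNorm ((S j).indicator f) 2 μ := by
        refine tsum_congr fun j => ?_
        rw [eLpNorm_indicator_eq_lintegral μ f (hm j)]

end Stmt8

namespace Stmt8

lemma weight_lower {s : ℝ} (hs : 0 < s) (k : ℕ) {t : ℝ} (ht : dyadicR k ≤ |t|) :
    (2:ℝ) ^ (((k:ℝ) - 1) * s) ≤ (t ^ 2 + 1) ^ (s / 2) := by
  have h1 : (1:ℝ) ≤ t ^ 2 + 1 := by nlinarith [sq_nonneg t]
  cases k with
  | zero =>
    have hR : (1:ℝ) ≤ (t ^ 2 + 1) ^ (s / 2) := by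
      have := Real.rpow_le_rpow (by norm_num : (0:ℝ) ≤ 1) h1 (by positivity : (0:ℝ) ≤ s / 2)
      rwa [Real.one_rpow] at this
    refine le_trans (Real.rpow_le_one_of_one_le_of_nonpos one_le_two ?_) hR
    push_cast
    nlinarith
  | succ m =>
    have h2 : ((2:ℝ) ^ m) ^ 2 ≤ t ^ 2 := by
      rw [← sq_abs t]
      exact pow_le_pow_left₀ (dyadicR_nonneg (m+1)) ht 2
    have h3 : (2:ℝ) ^ (2 * m) = ((2:ℝ) ^ m) ^ 2 := by ring
    calc (2:ℝ) ^ (((((m+1:ℕ)):ℝ) - 1) * s)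
        = ((2:ℝ) ^ ((2*m:ℕ):ℝ)) ^ (s/2) := by
          rw [← Real.rpow_mul (by norm_num : (0:ℝ) ≤ 2)]
          congr 1
          push_cast
          ring
      _ ≤ (t ^ 2 + 1) ^ (s / 2) := by
          apply Real.rpow_le_rpow (by positivity) ?_ (by positivity)
          rw [Real.rpow_natCast]
          push_cast
          nlinarith

lemma weight_upper {s : ℝ} (hs : 0 < s) (j : ℕ) {t : ℝ} (ht : |t| < dyadicR (j + 1)) :
    (t ^ 2 + 1) ^ (s / 2) ≤ (2:ℝ) ^ (((j:ℝ) + 1) * s) := by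
  have ht' : |t| < (2:ℝ) ^ j := ht
  have h1 : t ^ 2 < ((2:ℝ) ^ j) ^ 2 := by
    rw [← sq_abs t]
    exact pow_lt_pow_left₀ ht' (abs_nonneg t) two_ne_zero
  have h2 : (1:ℝ) ≤ (2:ℝ) ^ j := one_le_pow₀ one_le_two
  calc (t ^ 2 + 1) ^ (s / 2)
      ≤ ((2:ℝ) ^ ((2*(j+1):ℕ):ℝ)) ^ (s/2) := by
        apply Real.rpow_le_rpow (by positivity) ?_ (by positivity)
        rw [Real.rpow_natCast]
        have h3 : (2:ℝ) ^ (2 * (j+1)) = ((2:ℝ) ^ j) ^ 2 * 4 := by ring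
        nlinarith
    _ = (2:ℝ) ^ (((j:ℝ) + 1) * s) := by
        rw [← Real.rpow_mul (by norm_num : (0:ℝ) ≤ 2)]
        congr 1
        push_cast
        ring

end Stmt8

namespace Stmt8

lemma sqrt_dyadic (k : ℕ) : Real.sqrt (dyadicR (k + 1)) = Real.sqrt 2 ^ k := by
  rw [show dyadicR (k+1) = (2:ℝ)^k from rfl, Real.sqrt_eq_rpow, Real.sqrt_eq_rpow,
    ← Real.rpow_natCast (2:ℝ) k, ← Real.rpow_mul (by norm_num),
    ← Real.rpow_natCast ((2:ℝ) ^ ((1:ℝ)/2)) k, ← Real.rpow_mul (by norm_num)]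
  congr 1
  ring

lemma geom_sum_le (j : ℕ) :
    (∑' k : ℕ, if k ≤ j then (ENNReal.ofReal (Real.sqrt 2)) ^ k else 0)
      ≤ 4 * (ENNReal.ofReal (Real.sqrt 2)) ^ j := by
  set r := ENNReal.ofReal (Real.sqrt 2) with hr
  have h4r : (4:ℝ≥0∞) ≤ 3 * r := by
    have h : (4:ℝ) ≤ 3 * Real.sqrt 2 := by
      nlinarith [Real.sq_sqrt (by norm_num : (0:ℝ) ≤ 2), Real.sqrt_nonneg 2]
    calc (4:ℝ≥0∞) = ENNReal.ofReal 4 := by norm_num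
      _ ≤ ENNReal.ofReal (3 * Real.sqrt 2) := ENNReal.ofReal_le_ofReal h
      _ = ENNReal.ofReal 3 * r := ENNReal.ofReal_mul (by norm_num)
      _ = 3 * r := by norm_num
  have key : ∀ n : ℕ, ∑ k ∈ Finset.range (n+1), r ^ k ≤ 4 * r ^ n := by
    intro n
    induction n with
    | zero => simp
    | succ n ih =>
      rw [Finset.sum_range_succ]
      have step : (4:ℝ≥0∞) * r ^ n ≤ 3 * r ^ (n+1) := by
        calc (4:ℝ≥0∞) * r ^ n ≤ (3 * r) * r ^ n := mul_le_mul_left h4r _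
          _ = 3 * r ^ (n+1) := by ring
      calc ∑ k ∈ Finset.range (n+1), r ^ k + r ^ (n+1)
          ≤ 4 * r ^ n + r ^ (n+1) := add_le_add_left ih _
        _ ≤ 3 * r ^ (n+1) + r ^ (n+1) := add_le_add_left step _
        _ = 4 * r ^ (n+1) := by ring
  rw [tsum_eq_sum (s := Finset.range (j+1))
    (fun k hk => if_neg (by simp only [Finset.mem_range] at hk; omega))]
  calc ∑ k ∈ Finset.range (j+1), (if k ≤ j then r ^ k else 0)
      = ∑ k ∈ Finset.range (j+1), r ^ k :=
        Finset.sum_congr rfl fun k hk =>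
          if_pos (by simp only [Finset.mem_range] at hk; omega)
    _ ≤ 4 * r ^ j := key j

set_option maxHeartbeats 1000000 in
lemma tail_geom (ρ : ℝ≥0∞) (j : ℕ) :
    (∑' k : ℕ, if j < k then ρ ^ k else 0) = ρ ^ (j+1) * (1 - ρ)⁻¹ := by
  have h := Summable.sum_add_tsum_nat_add' (f := fun k => if j < k then ρ ^ k else 0) (k := j+1)
    ENNReal.summable
  rw [← h]
  have h1 : ∑ i ∈ Finset.range (j+1), (if j < i then ρ ^ i else 0) = 0 :=
    Finset.sum_eq_zero fun i hi => if_neg (by simp only [Finset.mem_range] at hi; omega)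
  rw [h1, zero_add]
  calc ∑' i : ℕ, (if j < i + (j+1) then ρ ^ (i + (j+1)) else 0)
      = ∑' i : ℕ, ρ ^ (j+1) * ρ ^ i := tsum_congr fun i => by
        rw [if_pos (by omega), pow_add, mul_comm]
    _ = ρ ^ (j+1) * (1 - ρ)⁻¹ := by rw [ENNReal.tsum_mul_left, ENNReal.tsum_geometric]

lemma rc1 (s : ℝ) (k : ℕ) :
    Real.sqrt 2 ^ k * (2:ℝ) ^ ((1 - (k:ℝ)) * s)
      = (2:ℝ) ^ s * ((2:ℝ) ^ ((1:ℝ)/2 - s)) ^ k := by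
  rw [Real.sqrt_eq_rpow,
    ← Real.rpow_natCast ((2:ℝ) ^ ((1:ℝ)/2)) k, ← Real.rpow_natCast ((2:ℝ) ^ ((1:ℝ)/2 - s)) k,
    ← Real.rpow_mul (by norm_num), ← Real.rpow_mul (by norm_num),
    ← Real.rpow_add (by norm_num), ← Real.rpow_add (by norm_num)]
  congr 1
  ring

lemma rc2 (s : ℝ) (j : ℕ) :
    (2:ℝ) ^ (((j:ℝ) + 1) * s) * ((2:ℝ) ^ ((1:ℝ)/2 - s)) ^ (j+1)
      = Real.sqrt 2 * Real.sqrt 2 ^ j := by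
  rw [Real.sqrt_eq_rpow,
    ← Real.rpow_natCast ((2:ℝ) ^ ((1:ℝ)/2 - s)) (j+1), ← Real.rpow_natCast ((2:ℝ) ^ ((1:ℝ)/2)) j,
    ← Real.rpow_mul (by norm_num), ← Real.rpow_mul (by norm_num),
    ← Real.rpow_add (by norm_num), ← Real.rpow_add (by norm_num)]
  congr 1
  push_cast
  ring

end Stmt8

open Stmt8

set_option maxHeartbeats 2000000

/-- interpolation-type lemma. For `s > 1/2` there is `C = C(s) > 0`,
independent of `T` (and of the operators `A₁, A₂`, modelled up to unitary equivalence
as multiplication by measurable functions `aᵢ` on `L²(μᵢ)`): if `T : H₁ → H₂` is a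
bounded operator and `⟨A₂⟩^s T ⟨A₁⟩^{-s}` is bounded with norm `≤ N`, i.e.
`‖⟨A₂⟩^s T u‖ ≤ N ‖⟨A₁⟩^s u‖` for all `u`, then
`‖T u‖_{B(A₂)} ≤ C (‖T‖ + N) ‖u‖_{B(A₁)}` for all `u ∈ B(A₁) ⊆ H₁`. -/
theorem stmt8 (s : ℝ) (hs : 1 / 2 < s) :
    ∃ C > (0 : ℝ), ∀ (α₁ α₂ : Type) (_ : MeasurableSpace α₁) (_ : MeasurableSpace α₂)
      (μ₁ : Measure α₁) (μ₂ : Measure α₂) (a₁ : α₁ → ℝ) (a₂ : α₂ → ℝ),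
      Measurable a₁ → Measurable a₂ →
      ∀ (T : Lp ℂ 2 μ₁ →L[ℂ] Lp ℂ 2 μ₂) (N : ℝ),
        (∀ u : Lp ℂ 2 μ₁,
          eLpNorm (fun x => ((a₂ x ^ 2 + 1) ^ (s / 2) : ℝ) • (T u : α₂ → ℂ) x) 2 μ₂ ≤
            ENNReal.ofReal N *
              eLpNorm (fun x => ((a₁ x ^ 2 + 1) ^ (s / 2) : ℝ) • (u : α₁ → ℂ) x) 2 μ₁) →
        ∀ u : Lp ℂ 2 μ₁,
          besovE μ₂ a₂ (T u) ≤ ENNReal.ofReal (C * (‖T‖ + N)) * besovE μ₁ a₁ u := by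
  classical
  have hs0 : 0 < s := by linarith
  set t : ℝ := (2:ℝ) ^ ((1:ℝ)/2 - s) with htdef
  have ht0 : 0 < t := Real.rpow_pos_of_pos (by norm_num) _
  have ht1 : t < 1 := Real.rpow_lt_one_of_one_lt_of_neg one_lt_two (by linarith)
  set C2 : ℝ := (2:ℝ) ^ s * (1 - t)⁻¹ * Real.sqrt 2 with hC2def
  have hC2pos : 0 < C2 := by
    have h1 : 0 < (1 - t)⁻¹ := inv_pos.2 (by linarith)
    have h2 : 0 < (2:ℝ) ^ s := Real.rpow_pos_of_pos (by norm_num) s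
    have h3 : 0 < Real.sqrt 2 := Real.sqrt_pos.2 (by norm_num)
    exact mul_pos (mul_pos h2 h1) h3
  refine ⟨4 + C2, by linarith, ?_⟩
  intro α₁ α₂ m₁ m₂ μ₁ μ₂ a₁ a₂ ha₁ ha₂ T N hN u
  by_cases hNpos : 0 < N
  swap
  · -- degenerate case : `ofReal N = 0`, so `T u = 0` a.e.
    have hN0 : ENNReal.ofReal N = 0 := by
      rw [ENNReal.ofReal_eq_zero]; linarith [not_lt.1 hNpos]
    have h1 := hN u
    rw [hN0, zero_mul, le_zero_iff] at h1
    have hmw : AEStronglyMeasurable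
        (fun x => ((a₂ x ^ 2 + 1) ^ (s / 2) : ℝ) • (T u : α₂ → ℂ) x) μ₂ := by
      apply AEStronglyMeasurable.smul (f := fun x => ((a₂ x ^ 2 + 1) ^ (s / 2) : ℝ)) ?_ (Lp.aestronglyMeasurable (T u))
      apply Measurable.aestronglyMeasurable
      fun_prop
    have hz := (eLpNorm_eq_zero_iff hmw (by norm_num)).1 h1
    have hTz : (T u : α₂ → ℂ) =ᵐ[μ₂] 0 := by
      filter_upwards [hz] with x hx
      have hw : ((a₂ x ^ 2 + 1) ^ (s / 2) : ℝ) ≠ 0 := by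
        have : (0:ℝ) < a₂ x ^ 2 + 1 := by nlinarith [sq_nonneg (a₂ x)]
        exact ne_of_gt (Real.rpow_pos_of_pos this _)
      have hx' : ((a₂ x ^ 2 + 1) ^ (s / 2) : ℝ) • (T u : α₂ → ℂ) x = 0 := hx
      simpa [smul_eq_zero, hw] using hx'
    have hbz : besovE μ₂ a₂ (T u) = 0 := by
      unfold besovE
      have hco : ∀ k : ℕ, blockE μ₂ a₂ (T u) k = 0 := by
        intro k
        unfold blockE
        have hind : Set.indicator {x | dyadicR k ≤ |a₂ x| ∧ |a₂ x| < dyadicR (k+1)}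
            (T u : α₂ → ℂ) =ᵐ[μ₂] 0 := by
          filter_upwards [hTz] with x hx
          have hx' : (T u : α₂ → ℂ) x = 0 := hx
          simp [Set.indicator_apply, hx']
        rw [eLpNorm_congr_ae hind]
        simp
      simp [hco]
    rw [hbz]
    exact zero_le
  -- main case : `0 < N`
  set r : ℝ≥0∞ := ENNReal.ofReal (Real.sqrt 2) with hrdef
  set ρ : ℝ≥0∞ := ENNReal.ofReal t with hρdef
  have hWk : ∀ k : ℕ, ENNReal.ofReal (Real.sqrt (dyadicR (k+1))) = r ^ k := fun k => by
    rw [sqrt_dyadic, ENNReal.ofReal_pow (Real.sqrt_nonneg 2)]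
  have hbes1 : besovE μ₁ a₁ u = ∑' j : ℕ, r ^ j * blockE μ₁ a₁ u j :=
    tsum_congr fun j => by rw [hWk j]
  -- the per-block estimate
  have hblock : ∀ k : ℕ, blockE μ₂ a₂ (T u) k ≤
      ENNReal.ofReal ((2:ℝ) ^ ((1 - (k:ℝ)) * s)) *
        (ENNReal.ofReal N *
          ∑' j : ℕ, (if j < k then
            ENNReal.ofReal ((2:ℝ) ^ (((j:ℝ) + 1) * s)) * blockE μ₁ a₁ u j else 0))
      + ENNReal.ofReal ‖T‖ * ∑' j : ℕ, (if k ≤ j then blockE μ₁ a₁ u j else 0) := by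
    intro k
    set L : Set α₁ := {x | |a₁ x| < dyadicR k} with hLdef
    have hL : MeasurableSet L := measurableSet_lt ha₁.abs measurable_const
    have hvmem : MemLp (L.indicator (u : α₁ → ℂ)) 2 μ₁ := (Lp.memLp u).indicator hL
    have hwmem : MemLp (Lᶜ.indicator (u : α₁ → ℂ)) 2 μ₁ := (Lp.memLp u).indicator hL.compl
    set v : Lp ℂ 2 μ₁ := hvmem.toLp _ with hvdef
    set w : Lp ℂ 2 μ₁ := hwmem.toLp _ with hwdef
    have huvw : u = v + w := by
      apply Lp.ext
      filter_upwards [Lp.coeFn_add v w, hvmem.coeFn_toLp, hwmem.coeFn_toLp] with x h1 h2 h3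
      rw [h1, Pi.add_apply, h2, h3]
      exact (congrFun (Set.indicator_self_add_compl L (u : α₁ → ℂ)) x).symm
    have hTu : (T u : α₂ → ℂ) =ᵐ[μ₂]
        fun x => (T v : α₂ → ℂ) x + (T w : α₂ → ℂ) x := by
      rw [huvw, map_add]
      exact Lp.coeFn_add (T v) (T w)
    have hS₂ : MeasurableSet (blkS a₂ k) := measurableSet_blkS ha₂ k
    -- step A : triangle inequality on the block
    have hA : blockE μ₂ a₂ (T u) k ≤
        eLpNorm ((blkS a₂ k).indicator (T v : α₂ → ℂ)) 2 μ₂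
          + eLpNorm ((blkS a₂ k).indicator (T w : α₂ → ℂ)) 2 μ₂ := by
      have h1 : (blkS a₂ k).indicator (T u : α₂ → ℂ) =ᵐ[μ₂]
          (blkS a₂ k).indicator (T v : α₂ → ℂ) + (blkS a₂ k).indicator (T w : α₂ → ℂ) := by
        filter_upwards [hTu] with x hx
        by_cases hxs : x ∈ blkS a₂ k
        · simp [Set.indicator_of_mem hxs, hx]
        · simp [Set.indicator_of_notMem hxs]
      calc blockE μ₂ a₂ (T u) k
          = eLpNorm ((blkS a₂ k).indicator (T v : α₂ → ℂ)
              + (blkS a₂ k).indicator (T w : α₂ → ℂ)) 2 μ₂ := eLpNorm_congr_ae h1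
        _ ≤ _ := eLpNorm_add_le ((Lp.aestronglyMeasurable (T v)).indicator hS₂)
              ((Lp.aestronglyMeasurable (T w)).indicator hS₂) one_le_two
    -- step B : high part
    have hw_le : eLpNorm ((blkS a₂ k).indicator (T w : α₂ → ℂ)) 2 μ₂ ≤
        ENNReal.ofReal ‖T‖ * ∑' j : ℕ, (if k ≤ j then blockE μ₁ a₁ u j else 0) := by
      have h2 : eLpNorm (w : α₁ → ℂ) 2 μ₁ = ENNReal.ofReal ‖w‖ := by
        rw [Lp.norm_def, ENNReal.ofReal_toReal (Lp.eLpNorm_ne_top _)]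
      have h3 : eLpNorm (w : α₁ → ℂ) 2 μ₁ = eLpNorm (Lᶜ.indicator (u : α₁ → ℂ)) 2 μ₁ :=
        eLpNorm_congr_ae hwmem.coeFn_toLp
      have h4 : Lᶜ = ⋃ j, (if k ≤ j then blkS a₁ j else (∅ : Set α₁)) := by
        rw [iUnion_high a₁ k]
        ext x
        simp [hLdef, not_lt]
      have h5 : eLpNorm (Lᶜ.indicator (u : α₁ → ℂ)) 2 μ₁ ≤
          ∑' j : ℕ, (if k ≤ j then blockE μ₁ a₁ u j else 0) := by
        rw [h4]
        refine le_trans (eLpNorm_indicator_iUnion_le μ₁ _ _ ?_ ?_)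
          (ENNReal.tsum_le_tsum fun j => ?_)
        · intro j
          split_ifs
          exacts [measurableSet_blkS ha₁ j, MeasurableSet.empty]
        · intro i j hij
          simp only [Function.onFun]
          split_ifs
          · exact disjoint_blkS a₁ hij
          · simp
          · simp
          · simp
        · split_ifs with h
          · exact le_of_eq rfl
          · simp
      calc eLpNorm ((blkS a₂ k).indicator (T w : α₂ → ℂ)) 2 μ₂
          ≤ eLpNorm (T w : α₂ → ℂ) 2 μ₂ := eLpNorm_indicator_le _
        _ = ENNReal.ofReal ‖T w‖ := by
            rw [Lp.norm_def, ENNReal.ofReal_toReal (Lp.eLpNorm_ne_top _)]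
        _ ≤ ENNReal.ofReal (‖T‖ * ‖w‖) := ENNReal.ofReal_le_ofReal (T.le_opNorm w)
        _ = ENNReal.ofReal ‖T‖ * ENNReal.ofReal ‖w‖ := ENNReal.ofReal_mul (norm_nonneg T)
        _ = ENNReal.ofReal ‖T‖ * eLpNorm (Lᶜ.indicator (u : α₁ → ℂ)) 2 μ₁ := by
            rw [← h3, h2]
        _ ≤ _ := mul_le_mul_right h5 _
    -- step C : low part
    have hv_le : eLpNorm ((blkS a₂ k).indicator (T v : α₂ → ℂ)) 2 μ₂ ≤
        ENNReal.ofReal ((2:ℝ) ^ ((1 - (k:ℝ)) * s)) *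
          (ENNReal.ofReal N *
            ∑' j : ℕ, (if j < k then
              ENNReal.ofReal ((2:ℝ) ^ (((j:ℝ) + 1) * s)) * blockE μ₁ a₁ u j else 0)) := by
      set c : ℝ := (2:ℝ) ^ ((1 - (k:ℝ)) * s) with hcdef
      have hc0 : 0 < c := Real.rpow_pos_of_pos (by norm_num) _
      set g : α₂ → ℂ := fun x => ((a₂ x ^ 2 + 1) ^ (s / 2) : ℝ) • (T v : α₂ → ℂ) x with hgdef
      have hpt : ∀ x, ‖(blkS a₂ k).indicator (T v : α₂ → ℂ) x‖ ≤
          ‖(c • (blkS a₂ k).indicator g) x‖ := by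
        intro x
        by_cases hxs : x ∈ blkS a₂ k
        · simp only [Set.indicator_of_mem hxs, Pi.smul_apply, hgdef]
          rw [norm_smul, norm_smul, Real.norm_of_nonneg hc0.le,
            Real.norm_of_nonneg (Real.rpow_nonneg (by nlinarith [sq_nonneg (a₂ x)]) _)]
          have hwl := weight_lower hs0 k hxs.1
          have hcc : c * (2:ℝ) ^ (((k:ℝ) - 1) * s) = 1 := by
            rw [hcdef, ← Real.rpow_add (by norm_num)]
            rw [show (1 - (k:ℝ)) * s + ((k:ℝ) - 1) * s = 0 by ring, Real.rpow_zero]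
          have h1c : 1 ≤ c * (a₂ x ^ 2 + 1) ^ (s / 2) := by
            calc (1:ℝ) = c * (2:ℝ) ^ (((k:ℝ) - 1) * s) := hcc.symm
              _ ≤ c * (a₂ x ^ 2 + 1) ^ (s / 2) := by
                  exact mul_le_mul_of_nonneg_left hwl hc0.le
          nlinarith [norm_nonneg ((T v : α₂ → ℂ) x),
            mul_le_mul_of_nonneg_right h1c (norm_nonneg ((T v : α₂ → ℂ) x))]
        · simp [Set.indicator_of_notMem hxs]
      have hv_wt : eLpNorm (fun x => ((a₁ x ^ 2 + 1) ^ (s / 2) : ℝ) • (v : α₁ → ℂ) x) 2 μ₁ ≤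
          ∑' j : ℕ, (if j < k then
            ENNReal.ofReal ((2:ℝ) ^ (((j:ℝ) + 1) * s)) * blockE μ₁ a₁ u j else 0) := by
        have h1 : (fun x => ((a₁ x ^ 2 + 1) ^ (s / 2) : ℝ) • (v : α₁ → ℂ) x) =ᵐ[μ₁]
            L.indicator (fun x => ((a₁ x ^ 2 + 1) ^ (s / 2) : ℝ) • (u : α₁ → ℂ) x) := by
          filter_upwards [hvmem.coeFn_toLp] with x hx
          rw [hx]
          by_cases hxs : x ∈ L
          · simp [Set.indicator_of_mem hxs]
          · simp [Set.indicator_of_notMem hxs]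
        rw [eLpNorm_congr_ae h1,
          show L = ⋃ j, (if j < k then blkS a₁ j else (∅ : Set α₁)) from (iUnion_low a₁ k).symm]
        refine le_trans (eLpNorm_indicator_iUnion_le μ₁ _ _ ?_ ?_)
          (ENNReal.tsum_le_tsum fun j => ?_)
        · intro j
          split_ifs
          exacts [measurableSet_blkS ha₁ j, MeasurableSet.empty]
        · intro i j hij
          simp only [Function.onFun]
          split_ifs
          · exact disjoint_blkS a₁ hij
          · simp
          · simp
          · simp
        · split_ifs with h
          · -- per-block weighted bound
            set cj : ℝ := (2:ℝ) ^ (((j:ℝ) + 1) * s) with hcjdef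
            have hptj : ∀ x, ‖(blkS a₁ j).indicator
                (fun x => ((a₁ x ^ 2 + 1) ^ (s / 2) : ℝ) • (u : α₁ → ℂ) x) x‖ ≤
                ‖(cj • (blkS a₁ j).indicator (u : α₁ → ℂ)) x‖ := by
              intro x
              by_cases hxs : x ∈ blkS a₁ j
              · simp only [Set.indicator_of_mem hxs, Pi.smul_apply]
                rw [norm_smul, norm_smul,
                  Real.norm_of_nonneg (Real.rpow_nonneg (by nlinarith [sq_nonneg (a₁ x)]) _),
                  Real.norm_of_nonneg (Real.rpow_pos_of_pos (by norm_num : (0:ℝ) < 2) _).le]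
                exact mul_le_mul_of_nonneg_right (weight_upper hs0 j hxs.2)
                  (norm_nonneg ((u : α₁ → ℂ) x))
              · simp [Set.indicator_of_notMem hxs]
            calc eLpNorm ((blkS a₁ j).indicator
                  (fun x => ((a₁ x ^ 2 + 1) ^ (s / 2) : ℝ) • (u : α₁ → ℂ) x)) 2 μ₁
                ≤ eLpNorm (cj • (blkS a₁ j).indicator (u : α₁ → ℂ)) 2 μ₁ := eLpNorm_mono hptj
              _ = (‖cj‖₊ : ℝ≥0∞) * eLpNorm ((blkS a₁ j).indicator (u : α₁ → ℂ)) 2 μ₁ :=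
                  eLpNorm_const_smul _ _ _ _
              _ = ENNReal.ofReal cj * blockE μ₁ a₁ u j := by
                  rw [← show ENNReal.ofReal ‖cj‖ = (‖cj‖₊ : ℝ≥0∞) from ofReal_norm cj,
                    Real.norm_of_nonneg (Real.rpow_pos_of_pos (by norm_num : (0:ℝ) < 2) _).le]
                  rfl
          · simp
      calc eLpNorm ((blkS a₂ k).indicator (T v : α₂ → ℂ)) 2 μ₂
          ≤ eLpNorm (c • (blkS a₂ k).indicator g) 2 μ₂ := eLpNorm_mono hpt
        _ = (‖c‖₊ : ℝ≥0∞) * eLpNorm ((blkS a₂ k).indicator g) 2 μ₂ :=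
            eLpNorm_const_smul _ _ _ _
        _ = ENNReal.ofReal c * eLpNorm ((blkS a₂ k).indicator g) 2 μ₂ := by
            rw [← show ENNReal.ofReal ‖c‖ = (‖c‖₊ : ℝ≥0∞) from ofReal_norm c, Real.norm_of_nonneg hc0.le]
        _ ≤ ENNReal.ofReal c * eLpNorm g 2 μ₂ := mul_le_mul_right (eLpNorm_indicator_le _) _
        _ ≤ ENNReal.ofReal c * (ENNReal.ofReal N *
              eLpNorm (fun x => ((a₁ x ^ 2 + 1) ^ (s / 2) : ℝ) • (v : α₁ → ℂ) x) 2 μ₁) :=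
            mul_le_mul_right (hN v) _
        _ ≤ _ := mul_le_mul_right (mul_le_mul_right hv_wt _) _
    exact le_trans hA (add_le_add hv_le hw_le)
  -- summation stage
  have hbes2 : besovE μ₂ a₂ (T u) = ∑' k : ℕ, r ^ k * blockE μ₂ a₂ (T u) k :=
    tsum_congr fun k => by rw [hWk k]
  have key1 : ∀ k : ℕ, r ^ k * ENNReal.ofReal ((2:ℝ) ^ ((1 - (k:ℝ)) * s))
      = ENNReal.ofReal ((2:ℝ) ^ s) * ρ ^ k := by
    intro k
    calc r ^ k * ENNReal.ofReal ((2:ℝ) ^ ((1 - (k:ℝ)) * s))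
        = ENNReal.ofReal (Real.sqrt 2 ^ k * (2:ℝ) ^ ((1 - (k:ℝ)) * s)) := by
          rw [hrdef, ← ENNReal.ofReal_pow (Real.sqrt_nonneg 2),
            ← ENNReal.ofReal_mul (by positivity)]
      _ = ENNReal.ofReal ((2:ℝ) ^ s * t ^ k) := by rw [rc1 s k, ← htdef]
      _ = ENNReal.ofReal ((2:ℝ) ^ s) * ρ ^ k := by
          rw [ENNReal.ofReal_mul (by positivity), hρdef, ENNReal.ofReal_pow ht0.le]
  have key2 : ∀ j : ℕ, ENNReal.ofReal ((2:ℝ) ^ (((j:ℝ) + 1) * s)) * ρ ^ (j + 1)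
      = r * r ^ j := by
    intro j
    calc ENNReal.ofReal ((2:ℝ) ^ (((j:ℝ) + 1) * s)) * ρ ^ (j + 1)
        = ENNReal.ofReal ((2:ℝ) ^ (((j:ℝ) + 1) * s) * t ^ (j + 1)) := by
          rw [hρdef, ← ENNReal.ofReal_pow ht0.le, ← ENNReal.ofReal_mul (by positivity)]
      _ = ENNReal.ofReal (Real.sqrt 2 * Real.sqrt 2 ^ j) := by
          rw [htdef]
          exact congrArg ENNReal.ofReal (rc2 s j)
      _ = r * r ^ j := by
          rw [ENNReal.ofReal_mul (Real.sqrt_nonneg 2),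
            ENNReal.ofReal_pow (Real.sqrt_nonneg 2), hrdef]
  have hinv : ((1:ℝ≥0∞) - ρ)⁻¹ = ENNReal.ofReal ((1 - t)⁻¹) := by
    have h1 : (1:ℝ≥0∞) - ρ = ENNReal.ofReal (1 - t) := by
      rw [ENNReal.ofReal_sub 1 ht0.le, ENNReal.ofReal_one]
    rw [h1, ← ENNReal.ofReal_inv_of_pos (by linarith)]
  have hstep : ∀ (k : ℕ) (X Y : ℝ≥0∞),
      r ^ k * (ENNReal.ofReal ((2:ℝ) ^ ((1 - (k:ℝ)) * s)) * (ENNReal.ofReal N * X)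
        + ENNReal.ofReal ‖T‖ * Y)
      = ENNReal.ofReal ((2:ℝ) ^ s) * (ENNReal.ofReal N * (ρ ^ k * X))
        + ENNReal.ofReal ‖T‖ * (r ^ k * Y) := by
    intro k X Y
    rw [mul_add]
    congr 1
    · calc r ^ k * (ENNReal.ofReal ((2:ℝ) ^ ((1 - (k:ℝ)) * s)) * (ENNReal.ofReal N * X))
          = (r ^ k * ENNReal.ofReal ((2:ℝ) ^ ((1 - (k:ℝ)) * s))) * (ENNReal.ofReal N * X) := by
            ring
        _ = (ENNReal.ofReal ((2:ℝ) ^ s) * ρ ^ k) * (ENNReal.ofReal N * X) := by rw [key1 k]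
        _ = _ := by ring
    · ring
  have hAcalc : (∑' k : ℕ, ρ ^ k * (∑' j : ℕ, (if j < k then
        ENNReal.ofReal ((2:ℝ) ^ (((j:ℝ) + 1) * s)) * blockE μ₁ a₁ u j else 0)))
      = ENNReal.ofReal ((1 - t)⁻¹) * (r * ∑' j : ℕ, r ^ j * blockE μ₁ a₁ u j) := by
    calc (∑' k : ℕ, ρ ^ k * (∑' j : ℕ, (if j < k then
          ENNReal.ofReal ((2:ℝ) ^ (((j:ℝ) + 1) * s)) * blockE μ₁ a₁ u j else 0)))
        = ∑' k : ℕ, ∑' j : ℕ, (if j < k then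
            ρ ^ k * (ENNReal.ofReal ((2:ℝ) ^ (((j:ℝ) + 1) * s)) * blockE μ₁ a₁ u j) else 0) := by
          refine tsum_congr fun k => ?_
          rw [← ENNReal.tsum_mul_left]
          exact tsum_congr fun j => by split_ifs <;> simp
      _ = ∑' j : ℕ, ∑' k : ℕ, (if j < k then
            ρ ^ k * (ENNReal.ofReal ((2:ℝ) ^ (((j:ℝ) + 1) * s)) * blockE μ₁ a₁ u j) else 0) :=
          ENNReal.tsum_comm
      _ = ∑' j : ℕ, (∑' k : ℕ, (if j < k then ρ ^ k else 0)) *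
            (ENNReal.ofReal ((2:ℝ) ^ (((j:ℝ) + 1) * s)) * blockE μ₁ a₁ u j) := by
          refine tsum_congr fun j => ?_
          rw [← ENNReal.tsum_mul_right]
          exact tsum_congr fun k => by split_ifs <;> simp
      _ = ∑' j : ℕ, ENNReal.ofReal ((1 - t)⁻¹) * (r * (r ^ j * blockE μ₁ a₁ u j)) := by
          refine tsum_congr fun j => ?_
          rw [tail_geom ρ j]
          calc (ρ ^ (j+1) * ((1:ℝ≥0∞) - ρ)⁻¹) *
                (ENNReal.ofReal ((2:ℝ) ^ (((j:ℝ) + 1) * s)) * blockE μ₁ a₁ u j)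
              = ((1:ℝ≥0∞) - ρ)⁻¹ *
                ((ENNReal.ofReal ((2:ℝ) ^ (((j:ℝ) + 1) * s)) * ρ ^ (j+1)) * blockE μ₁ a₁ u j) := by
                ring
            _ = ENNReal.ofReal ((1 - t)⁻¹) * ((r * r ^ j) * blockE μ₁ a₁ u j) := by
                rw [hinv, key2 j]
            _ = _ := by ring
      _ = ENNReal.ofReal ((1 - t)⁻¹) * (r * ∑' j : ℕ, r ^ j * blockE μ₁ a₁ u j) := by
          rw [ENNReal.tsum_mul_left, ENNReal.tsum_mul_left]
  have hBcalc : (∑' k : ℕ, r ^ k * (∑' j : ℕ, (if k ≤ j then blockE μ₁ a₁ u j else 0)))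
      ≤ 4 * ∑' j : ℕ, r ^ j * blockE μ₁ a₁ u j := by
    calc (∑' k : ℕ, r ^ k * (∑' j : ℕ, (if k ≤ j then blockE μ₁ a₁ u j else 0)))
        = ∑' k : ℕ, ∑' j : ℕ, (if k ≤ j then r ^ k * blockE μ₁ a₁ u j else 0) := by
          refine tsum_congr fun k => ?_
          rw [← ENNReal.tsum_mul_left]
          exact tsum_congr fun j => by split_ifs <;> simp
      _ = ∑' j : ℕ, ∑' k : ℕ, (if k ≤ j then r ^ k * blockE μ₁ a₁ u j else 0) :=
          ENNReal.tsum_comm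
      _ = ∑' j : ℕ, (∑' k : ℕ, (if k ≤ j then r ^ k else 0)) * blockE μ₁ a₁ u j := by
          refine tsum_congr fun j => ?_
          rw [← ENNReal.tsum_mul_right]
          exact tsum_congr fun k => by split_ifs <;> simp
      _ ≤ ∑' j : ℕ, (4 * r ^ j) * blockE μ₁ a₁ u j :=
          ENNReal.tsum_le_tsum fun j => mul_le_mul_left (geom_sum_le j) _
      _ = 4 * ∑' j : ℕ, r ^ j * blockE μ₁ a₁ u j := by
          rw [← ENNReal.tsum_mul_left]
          exact tsum_congr fun j => by ring
  have hC2e : ENNReal.ofReal C2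
      = ENNReal.ofReal ((2:ℝ) ^ s) * (ENNReal.ofReal ((1 - t)⁻¹) * r) := by
    have hinv_nn : (0:ℝ) ≤ (1 - t)⁻¹ := inv_nonneg.2 (by linarith)
    rw [hC2def, hrdef,
      ENNReal.ofReal_mul (mul_nonneg (by positivity) hinv_nn),
      ENNReal.ofReal_mul (by positivity), mul_assoc]
  have hfinal : ENNReal.ofReal C2 * ENNReal.ofReal N + 4 * ENNReal.ofReal ‖T‖
      ≤ ENNReal.ofReal ((4 + C2) * (‖T‖ + N)) := by
    calc ENNReal.ofReal C2 * ENNReal.ofReal N + 4 * ENNReal.ofReal ‖T‖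
        = ENNReal.ofReal (C2 * N) + ENNReal.ofReal (4 * ‖T‖) := by
          rw [← ENNReal.ofReal_mul hC2pos.le,
            show (4:ℝ≥0∞) = ENNReal.ofReal (4:ℝ) by norm_num,
            ← ENNReal.ofReal_mul (by norm_num)]
      _ = ENNReal.ofReal (C2 * N + 4 * ‖T‖) :=
          (ENNReal.ofReal_add (mul_nonneg hC2pos.le hNpos.le) (by positivity)).symm
      _ ≤ ENNReal.ofReal ((4 + C2) * (‖T‖ + N)) := by
          refine ENNReal.ofReal_le_ofReal ?_
          nlinarith [norm_nonneg T, hNpos.le, hC2pos.le,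
            mul_nonneg hC2pos.le (norm_nonneg T)]
  calc besovE μ₂ a₂ (T u) = ∑' k : ℕ, r ^ k * blockE μ₂ a₂ (T u) k := hbes2
    _ ≤ ∑' k : ℕ, (ENNReal.ofReal ((2:ℝ) ^ s) * (ENNReal.ofReal N *
            (ρ ^ k * (∑' j : ℕ, (if j < k then
              ENNReal.ofReal ((2:ℝ) ^ (((j:ℝ) + 1) * s)) * blockE μ₁ a₁ u j else 0))))
          + ENNReal.ofReal ‖T‖ * (r ^ k *
            (∑' j : ℕ, (if k ≤ j then blockE μ₁ a₁ u j else 0)))) := by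
        refine ENNReal.tsum_le_tsum fun k => ?_
        refine le_trans (mul_le_mul_right (hblock k) (r ^ k)) (le_of_eq (hstep k _ _))
    _ = ENNReal.ofReal ((2:ℝ) ^ s) * (ENNReal.ofReal N *
            (∑' k : ℕ, ρ ^ k * (∑' j : ℕ, (if j < k then
              ENNReal.ofReal ((2:ℝ) ^ (((j:ℝ) + 1) * s)) * blockE μ₁ a₁ u j else 0))))
          + ENNReal.ofReal ‖T‖ * (∑' k : ℕ, r ^ k *
            (∑' j : ℕ, (if k ≤ j then blockE μ₁ a₁ u j else 0))) := by
        rw [ENNReal.tsum_add, ENNReal.tsum_mul_left, ENNReal.tsum_mul_left,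
          ENNReal.tsum_mul_left]
    _ ≤ ENNReal.ofReal ((2:ℝ) ^ s) * (ENNReal.ofReal N *
            (ENNReal.ofReal ((1 - t)⁻¹) * (r * ∑' j : ℕ, r ^ j * blockE μ₁ a₁ u j)))
          + ENNReal.ofReal ‖T‖ * (4 * ∑' j : ℕ, r ^ j * blockE μ₁ a₁ u j) :=
        add_le_add (mul_le_mul_right (mul_le_mul_right (le_of_eq hAcalc) _) _)
          (mul_le_mul_right hBcalc _)
    _ = (ENNReal.ofReal C2 * ENNReal.ofReal N + 4 * ENNReal.ofReal ‖T‖) *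
          (∑' j : ℕ, r ^ j * blockE μ₁ a₁ u j) := by
        rw [hC2e]
        ring
    _ ≤ ENNReal.ofReal ((4 + C2) * (‖T‖ + N)) * (∑' j : ℕ, r ^ j * blockE μ₁ a₁ u j) :=
        mul_le_mul_left hfinal _
    _ = ENNReal.ofReal ((4 + C2) * (‖T‖ + N)) * besovE μ₁ a₁ u := by rw [← hbes1]
end
end
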